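/- arXiv:1610.03774 — 2 statements merged into one kernel-verified Lean document; each statement's English description precedes it below -/
import Mathlib

section
/- If 0 ≤ γ < 2b/(R² + (b−1)·‖H‖₂), then T_b is an invertible linear operator on the space of symmetric d×d matrices, and T_b⁻¹ is a positive-semidefinite-preserving map: for every symmetric positive semidefinite matrix W, the unique symmetric matrix A with T_b A = W is positive semidefinite. -/
open MeasureTheory ProbabilityTheory Matrix Finset Filter
open scoped BigOperators

noncomputable section

/-- Expectation of a random matrix, taken entrywise. -/
def matExp {Ω : Type*} [MeasurableSpace Ω] {d : ℕ} (μ : Measure Ω)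
    (M : Ω → Matrix (Fin d) (Fin d) ℝ) : Matrix (Fin d) (Fin d) ℝ :=
  Matrix.of fun i j => ∫ ω, M ω i j ∂μ

/-- The population Hessian `H = E[x xᵀ]`. -/
def Hmat {d : ℕ} (D : Measure ((Fin d → ℝ) × ℝ)) : Matrix (Fin d) (Fin d) ℝ :=
  matExp D fun p => vecMulVec p.1 p.1

/-- The population square loss `L(w) = (1/2) E[(y - ⟨w,x⟩)²]`. -/
def Lloss {d : ℕ} (D : Measure ((Fin d → ℝ) × ℝ)) (w : Fin d → ℝ) : ℝ :=
  (1/2) * ∫ p, (p.2 - w ⬝ᵥ p.1)^2 ∂D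

/-- The noise covariance matrix `Σ = E[ε² x xᵀ]` where `ε = y - ⟨w*, x⟩`. -/
def SigMat {d : ℕ} (D : Measure ((Fin d → ℝ) × ℝ)) (wstar : Fin d → ℝ) :
    Matrix (Fin d) (Fin d) ℝ :=
  matExp D fun p => ((p.2 - wstar ⬝ᵥ p.1)^2) • vecMulVec p.1 p.1

/-- The fourth-moment matrix `M(I) = E[‖x‖² x xᵀ]`. -/
def MI {d : ℕ} (D : Measure ((Fin d → ℝ) × ℝ)) : Matrix (Fin d) (Fin d) ℝ :=
  matExp D fun p => (p.1 ⬝ᵥ p.1) • vecMulVec p.1 p.1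

/-- `specNormBound A t` : the spectral norm of the symmetric matrix `A` is at most `t`,
expressed as `-t•I ⪯ A ⪯ t•I`. -/
def specNormBound {d : ℕ} (A : Matrix (Fin d) (Fin d) ℝ) (t : ℝ) : Prop :=
  (t • (1 : Matrix (Fin d) (Fin d) ℝ) - A).PosSemidef ∧
  (t • (1 : Matrix (Fin d) (Fin d) ℝ) + A).PosSemidef

/-- `σ̂²_MLE = tr(H⁻¹ Σ)`. -/
def sigMLE {d : ℕ} (D : Measure ((Fin d → ℝ) × ℝ)) (wstar : Fin d → ℝ) : ℝ :=
  ((Hmat D)⁻¹ * SigMat D wstar).trace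

/-- `ρ_m = d ‖U‖₂ / tr U`, where `U = (H_L + H_R)⁻¹ Σ`. -/
def rhoM {d : ℕ} (U : Matrix (Fin d) (Fin d) ℝ) (Unorm : ℝ) : ℝ :=
  (d : ℝ) * Unorm / U.trace

/-- The maximal step size `γ_{b,max} = 2b / (R² ρ_m + (b-1) ‖H‖₂)`. -/
def gmax (Rsq ρ Hnorm : ℝ) (b : ℕ) : ℝ :=
  2 * b / (Rsq * ρ + ((b : ℝ) - 1) * Hnorm)

/-- `κ_b = (R² ρ_m + (b-1) ‖H‖₂) / (b μ)`. -/
def kappaB (Rsq ρ Hnorm μ : ℝ) (b : ℕ) : ℝ :=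
  (Rsq * ρ + ((b : ℝ) - 1) * Hnorm) / ((b : ℝ) * μ)

/-- The fourth-moment operator `M A = E[(xᵀ A x) x xᵀ]`. -/
def Mop {d : ℕ} (D : Measure ((Fin d → ℝ) × ℝ)) (A : Matrix (Fin d) (Fin d) ℝ) :
    Matrix (Fin d) (Fin d) ℝ :=
  matExp D fun p => (p.1 ⬝ᵥ A.mulVec p.1) • vecMulVec p.1 p.1

/-- The operator `T_b A = HA + AH - (γ/b) M A - γ((b-1)/b) HAH`. -/
def TopB {d : ℕ} (D : Measure ((Fin d → ℝ) × ℝ)) (γ : ℝ) (b : ℕ)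
    (A : Matrix (Fin d) (Fin d) ℝ) : Matrix (Fin d) (Fin d) ℝ :=
  Hmat D * A + A * Hmat D - (γ / (b : ℝ)) • Mop D A
    - (γ * ((b : ℝ) - 1) / (b : ℝ)) • (Hmat D * A * Hmat D)


namespace TbAux

variable {d : ℕ}

/-- Frobenius pairing of matrices. -/
def ip (A B : Matrix (Fin d) (Fin d) ℝ) : ℝ := ∑ i, ∑ j, A i j * B i j

lemma conjT (A : Matrix (Fin d) (Fin d) ℝ) : Aᴴ = Aᵀ := by
  ext i j; simp [conjTranspose_apply]

lemma star_vec (v : Fin d → ℝ) : star v = v := by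
  funext i; simp

lemma quad_eq (M : Matrix (Fin d) (Fin d) ℝ) (v : Fin d → ℝ) :
    v ⬝ᵥ M *ᵥ v = ∑ i, ∑ j, M i j * (v i * v j) := by
  simp only [dotProduct, mulVec, Finset.mul_sum]
  exact Finset.sum_congr rfl fun i _ => Finset.sum_congr rfl fun j _ => by ring

lemma ip_trace (A B : Matrix (Fin d) (Fin d) ℝ) : ip A B = (Aᵀ * B).trace := by
  simp only [ip, Matrix.trace, Matrix.diag, mul_apply, transpose_apply]
  exact Finset.sum_comm

lemma ip_comm (A B : Matrix (Fin d) (Fin d) ℝ) : ip A B = ip B A := by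
  simp only [ip]
  exact Finset.sum_congr rfl fun i _ => Finset.sum_congr rfl fun j _ => by ring

lemma ip_add_right (A B C : Matrix (Fin d) (Fin d) ℝ) : ip A (B + C) = ip A B + ip A C := by
  simp [ip, Matrix.add_apply, mul_add, Finset.sum_add_distrib]

lemma ip_sub_right (A B C : Matrix (Fin d) (Fin d) ℝ) : ip A (B - C) = ip A B - ip A C := by
  simp [ip, Matrix.sub_apply, mul_sub, Finset.sum_sub_distrib]

lemma ip_smul_right (A B : Matrix (Fin d) (Fin d) ℝ) (c : ℝ) : ip A (c • B) = c * ip A B := by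
  simp [ip, Matrix.smul_apply, Finset.mul_sum]
  exact Finset.sum_congr rfl fun i _ => Finset.sum_congr rfl fun j _ => by ring

lemma ip_self_nonneg (A : Matrix (Fin d) (Fin d) ℝ) : 0 ≤ ip A A := by
  apply Finset.sum_nonneg; intro i _; apply Finset.sum_nonneg; intro j _; exact mul_self_nonneg _

lemma ip_self_pos (A : Matrix (Fin d) (Fin d) ℝ) (hA : A ≠ 0) : 0 < ip A A := by
  rcases lt_or_eq_of_le (ip_self_nonneg A) with h | h
  · exact h
  · exfalso; apply hA
    ext i j
    have h0 : ∀ i ∈ (Finset.univ : Finset (Fin d)), (0:ℝ) ≤ ∑ j, A i j * A i j :=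
      fun i _ => Finset.sum_nonneg fun j _ => mul_self_nonneg _
    have h1 : ∀ i ∈ (Finset.univ : Finset (Fin d)), ∑ j, A i j * A i j = 0 := by
      have := (Finset.sum_eq_zero_iff_of_nonneg h0).mp h.symm
      exact this
    have h2 := (Finset.sum_eq_zero_iff_of_nonneg (fun j _ => mul_self_nonneg (A i j))).mp
      (h1 i (Finset.mem_univ i)) j (Finset.mem_univ j)
    have := mul_self_eq_zero.mp h2
    simpa using this

/-- pairing of a symmetric and an antisymmetric matrix vanishes -/
lemma ip_sym_antisym (S N : Matrix (Fin d) (Fin d) ℝ) (hS : Sᵀ = S) (hN : Nᵀ = -N) :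
    ip S N = 0 := by
  have hSe : ∀ i j, S j i = S i j := fun i j => by
    rw [← transpose_apply S i j, hS]
  have hNe : ∀ i j, N j i = -N i j := fun i j => by
    rw [← transpose_apply N i j, hN]; simp
  have h : ip S N = -ip S N := by
    calc ip S N = ∑ i, ∑ j, S j i * N j i := by rw [ip, Finset.sum_comm]
      _ = ∑ i, ∑ j, -(S i j * N i j) := by
          exact Finset.sum_congr rfl fun i _ => Finset.sum_congr rfl fun j _ => by
            rw [hSe, hNe]; ring
      _ = -ip S N := by simp [ip]
  linarith
end TbAux
namespace TbAux

variable {d : ℕ}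

lemma psd_quad_nonneg {M : Matrix (Fin d) (Fin d) ℝ} (hM : M.PosSemidef) (v : Fin d → ℝ) :
    0 ≤ v ⬝ᵥ M *ᵥ v := by
  have := hM.dotProduct_mulVec_nonneg v
  rwa [star_vec] at this

lemma psd_diag {M : Matrix (Fin d) (Fin d) ℝ} (hM : M.PosSemidef) (i : Fin d) :
    0 ≤ M i i := by
  have h := psd_quad_nonneg hM (Pi.single i 1)
  rwa [quad_eq, Finset.sum_eq_single i, Finset.sum_eq_single i, Pi.single_eq_same, mul_one, mul_one] at h
  · intro j _ hj; simp [Pi.single_eq_of_ne hj]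
  · intro h'; exact absurd (Finset.mem_univ i) h'
  · intro j _ hj
    apply Finset.sum_eq_zero; intro k _
    rcases eq_or_ne k i with rfl | hk
    · simp [Pi.single_eq_of_ne hj]
    · simp [Pi.single_eq_of_ne hk]
  · intro h'; exact absurd (Finset.mem_univ i) h'

lemma psd_trace_nonneg {M : Matrix (Fin d) (Fin d) ℝ} (hM : M.PosSemidef) : 0 ≤ M.trace := by
  apply Finset.sum_nonneg; intro i _; exact psd_diag hM i

open scoped MatrixOrder in
lemma trace_mul_psd_nonneg {P Q : Matrix (Fin d) (Fin d) ℝ} (hP : P.PosSemidef)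
    (hQ : Q.PosSemidef) : 0 ≤ (P * Q).trace := by
  obtain ⟨B, hB⟩ := CStarAlgebra.nonneg_iff_eq_star_mul_self.mp hP.nonneg
  rw [star_eq_conjTranspose] at hB
  have h1 : (P * Q).trace = (B * Q * Bᴴ).trace := by
    rw [hB, Matrix.mul_assoc, Matrix.trace_mul_comm]
  rw [h1]
  exact psd_trace_nonneg (hQ.mul_mul_conjTranspose_same B)

lemma ip_psd_nonneg {P Q : Matrix (Fin d) (Fin d) ℝ} (hP : P.PosSemidef)
    (hQ : Q.PosSemidef) : 0 ≤ ip P Q := by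
  rw [ip_trace, show Pᵀ = P from by rw [← conjT, hP.1]]
  exact trace_mul_psd_nonneg hP hQ

/-- the energy `tr(Aᵀ H A)`. -/
def en (H A : Matrix (Fin d) (Fin d) ℝ) : ℝ := (Aᵀ * H * A).trace

lemma en_psd {H : Matrix (Fin d) (Fin d) ℝ} (hH : H.PosSemidef)
    (A : Matrix (Fin d) (Fin d) ℝ) : (Aᵀ * H * A).PosSemidef := by
  have := hH.conjTranspose_mul_mul_same A
  rwa [conjT] at this

lemma en_nonneg {H : Matrix (Fin d) (Fin d) ℝ} (hH : H.PosSemidef)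
    (A : Matrix (Fin d) (Fin d) ℝ) : 0 ≤ en H A :=
  psd_trace_nonneg (en_psd hH A)

lemma diag_col (H A : Matrix (Fin d) (Fin d) ℝ) (i : Fin d) :
    (Aᵀ * H * A) i i = (fun j => A j i) ⬝ᵥ H *ᵥ (fun j => A j i) := by
  simp only [mul_apply, transpose_apply, dotProduct, mulVec, Finset.sum_mul, Finset.mul_sum]
  rw [Finset.sum_comm]
  exact Finset.sum_congr rfl fun j _ => Finset.sum_congr rfl fun k _ => by ring

lemma en_pos {H : Matrix (Fin d) (Fin d) ℝ} (hH : H.PosDef)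
    {A : Matrix (Fin d) (Fin d) ℝ} (hA : A ≠ 0) : 0 < en H A := by
  rcases lt_or_eq_of_le (en_nonneg hH.posSemidef A) with h | h
  · exact h
  · exfalso; apply hA
    have hdiag : ∀ i, (Aᵀ * H * A) i i = 0 := by
      intro i
      have h0 : ∀ i ∈ (Finset.univ : Finset (Fin d)), (0:ℝ) ≤ (Aᵀ * H * A) i i :=
        fun i _ => psd_diag (en_psd hH.posSemidef A) i
      exact (Finset.sum_eq_zero_iff_of_nonneg h0).mp h.symm i (Finset.mem_univ i)
    ext j i
    simp only [Matrix.zero_apply]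
    by_contra hne
    have hcol : (fun k => A k i) ≠ 0 := fun hc => hne (by simpa using congrFun hc j)
    have hpos := hH.dotProduct_mulVec_pos hcol
    rw [star_vec] at hpos
    have hz := hdiag i
    rw [diag_col H A i] at hz
    linarith

end TbAux
namespace TbAux

variable {d : ℕ}

lemma dot_nonneg (x : Fin d → ℝ) : 0 ≤ x ⬝ᵥ x :=
  Finset.sum_nonneg fun i _ => mul_self_nonneg _

lemma sq_le_dot (x : Fin d → ℝ) (i : Fin d) : x i * x i ≤ x ⬝ᵥ x :=
  Finset.single_le_sum (fun j _ => mul_self_nonneg (x j)) (Finset.mem_univ i)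

lemma entry_abs_le (x : Fin d → ℝ) (i j : Fin d) : |x i * x j| ≤ x ⬝ᵥ x := by
  have h1 : |x i * x j| = |x i| * |x j| := abs_mul _ _
  have h2 : |x i| * |x j| * 2 ≤ x i * x i + x j * x j := by
    nlinarith [sq_nonneg (|x i| - |x j|), sq_abs (x i), sq_abs (x j)]
  have h3 := sq_le_dot x i
  have h4 := sq_le_dot x j
  linarith

lemma dot_le_one_add (x : Fin d → ℝ) : x ⬝ᵥ x ≤ 1 + (x ⬝ᵥ x)^2 := by
  nlinarith [dot_nonneg x]

lemma quad_abs_le (A : Matrix (Fin d) (Fin d) ℝ) (x : Fin d → ℝ) :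
    |x ⬝ᵥ A *ᵥ x| ≤ (∑ i, ∑ j, |A i j|) * (x ⬝ᵥ x) := by
  rw [quad_eq]
  calc |∑ i, ∑ j, A i j * (x i * x j)| ≤ ∑ i, |∑ j, A i j * (x i * x j)| :=
        Finset.abs_sum_le_sum_abs _ _
    _ ≤ ∑ i, ∑ j, |A i j * (x i * x j)| :=
        Finset.sum_le_sum fun i _ => Finset.abs_sum_le_sum_abs _ _
    _ ≤ ∑ i, ∑ j, |A i j| * (x ⬝ᵥ x) := by
        apply Finset.sum_le_sum; intro i _; apply Finset.sum_le_sum; intro j _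
        rw [abs_mul]
        exact mul_le_mul_of_nonneg_left (entry_abs_le x i j) (abs_nonneg _)
    _ = (∑ i, ∑ j, |A i j|) * (x ⬝ᵥ x) := by
        rw [Finset.sum_mul]
        exact Finset.sum_congr rfl fun i _ => (Finset.sum_mul _ _ _).symm

lemma cont_X (i : Fin d) : Continuous fun p : (Fin d → ℝ) × ℝ => p.1 i :=
  (continuous_apply i).comp continuous_fst

lemma cont_quad (A : Matrix (Fin d) (Fin d) ℝ) :
    Continuous fun p : (Fin d → ℝ) × ℝ => p.1 ⬝ᵥ A *ᵥ p.1 := by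
  simp only [quad_eq]
  refine continuous_finset_sum _ fun i _ => continuous_finset_sum _ fun j _ => ?_
  exact (continuous_const.mul ((cont_X i).mul (cont_X j)))

lemma cont_dot : Continuous fun p : (Fin d → ℝ) × ℝ => p.1 ⬝ᵥ p.1 := by
  refine continuous_finset_sum _ fun i _ => (cont_X i).mul (cont_X i)

section Integrability

variable (D : Measure ((Fin d → ℝ) × ℝ)) [IsProbabilityMeasure D]
variable (hmom4 : Integrable (fun p : (Fin d → ℝ) × ℝ => (p.1 ⬝ᵥ p.1)^2) D)

include hmom4

lemma integrable_of_bound {g : (Fin d → ℝ) × ℝ → ℝ} (hg : Continuous g) (c : ℝ)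
    (hb : ∀ p, |g p| ≤ c * (1 + (p.1 ⬝ᵥ p.1)^2)) : Integrable g D := by
  have hint : Integrable (fun p : (Fin d → ℝ) × ℝ => c * (1 + (p.1 ⬝ᵥ p.1)^2)) D :=
    ((integrable_const 1).add hmom4).const_mul c
  refine hint.mono' hg.aestronglyMeasurable ?_
  filter_upwards with p
  rw [Real.norm_eq_abs]
  exact hb p

lemma int_dot : Integrable (fun p : (Fin d → ℝ) × ℝ => p.1 ⬝ᵥ p.1) D := by
  refine integrable_of_bound D hmom4 cont_dot 1 fun p => ?_
  rw [abs_of_nonneg (dot_nonneg _), one_mul]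
  exact dot_le_one_add _

lemma int_entry (i j : Fin d) : Integrable (fun p : (Fin d → ℝ) × ℝ => p.1 i * p.1 j) D := by
  refine integrable_of_bound D hmom4 ((cont_X i).mul (cont_X j)) 1 fun p => ?_
  rw [one_mul]
  exact (entry_abs_le p.1 i j).trans (dot_le_one_add _)

lemma int_quad_entry (A : Matrix (Fin d) (Fin d) ℝ) (i j : Fin d) :
    Integrable (fun p : (Fin d → ℝ) × ℝ => (p.1 ⬝ᵥ A *ᵥ p.1) * (p.1 i * p.1 j)) D := by
  set C := ∑ i, ∑ j, |A i j| with hC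
  have hC0 : 0 ≤ C := Finset.sum_nonneg fun i _ => Finset.sum_nonneg fun j _ => abs_nonneg _
  refine integrable_of_bound D hmom4 ((cont_quad A).mul ((cont_X i).mul (cont_X j))) C fun p => ?_
  rw [abs_mul]
  calc |p.1 ⬝ᵥ A *ᵥ p.1| * |p.1 i * p.1 j| ≤ (C * (p.1 ⬝ᵥ p.1)) * (p.1 ⬝ᵥ p.1) :=
        mul_le_mul (quad_abs_le A p.1) (entry_abs_le p.1 i j) (abs_nonneg _)
          (mul_nonneg hC0 (dot_nonneg _))
    _ = C * (p.1 ⬝ᵥ p.1)^2 := by ring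
    _ ≤ C * (1 + (p.1 ⬝ᵥ p.1)^2) := by nlinarith [sq_nonneg (p.1 ⬝ᵥ p.1)]

lemma int_dot_entry (i j : Fin d) :
    Integrable (fun p : (Fin d → ℝ) × ℝ => (p.1 ⬝ᵥ p.1) * (p.1 i * p.1 j)) D := by
  refine integrable_of_bound D hmom4 (cont_dot.mul ((cont_X i).mul (cont_X j))) 1 fun p => ?_
  rw [abs_mul, one_mul, abs_of_nonneg (dot_nonneg _)]
  calc (p.1 ⬝ᵥ p.1) * |p.1 i * p.1 j| ≤ (p.1 ⬝ᵥ p.1) * (p.1 ⬝ᵥ p.1) :=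
        mul_le_mul_of_nonneg_left (entry_abs_le p.1 i j) (dot_nonneg _)
    _ ≤ 1 + (p.1 ⬝ᵥ p.1)^2 := by nlinarith

lemma int_quad_sq (A : Matrix (Fin d) (Fin d) ℝ) :
    Integrable (fun p : (Fin d → ℝ) × ℝ => (p.1 ⬝ᵥ A *ᵥ p.1)^2) D := by
  set C := ∑ i, ∑ j, |A i j| with hC
  have hC0 : 0 ≤ C := Finset.sum_nonneg fun i _ => Finset.sum_nonneg fun j _ => abs_nonneg _
  refine integrable_of_bound D hmom4 ((cont_quad A).pow 2) (C^2) fun p => ?_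
  have h1 := quad_abs_le A p.1
  have h2 : |(p.1 ⬝ᵥ A *ᵥ p.1)^2| = |p.1 ⬝ᵥ A *ᵥ p.1|^2 := by
    rw [abs_pow]
  rw [h2]
  calc |p.1 ⬝ᵥ A *ᵥ p.1|^2 ≤ (C * (p.1 ⬝ᵥ p.1))^2 := by
        apply pow_le_pow_left₀ (abs_nonneg _) h1
    _ = C^2 * (p.1 ⬝ᵥ p.1)^2 := by ring
    _ ≤ C^2 * (1 + (p.1 ⬝ᵥ p.1)^2) := by nlinarith [sq_nonneg C, sq_nonneg (p.1 ⬝ᵥ p.1)]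

lemma int_dot_quad (A : Matrix (Fin d) (Fin d) ℝ) :
    Integrable (fun p : (Fin d → ℝ) × ℝ => (p.1 ⬝ᵥ p.1) * (p.1 ⬝ᵥ A *ᵥ p.1)) D := by
  set C := ∑ i, ∑ j, |A i j| with hC
  have hC0 : 0 ≤ C := Finset.sum_nonneg fun i _ => Finset.sum_nonneg fun j _ => abs_nonneg _
  refine integrable_of_bound D hmom4 (cont_dot.mul (cont_quad A)) C fun p => ?_
  rw [abs_mul, abs_of_nonneg (dot_nonneg _)]
  calc (p.1 ⬝ᵥ p.1) * |p.1 ⬝ᵥ A *ᵥ p.1| ≤ (p.1 ⬝ᵥ p.1) * (C * (p.1 ⬝ᵥ p.1)) :=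
        mul_le_mul_of_nonneg_left (quad_abs_le A p.1) (dot_nonneg _)
    _ = C * (p.1 ⬝ᵥ p.1)^2 := by ring
    _ ≤ C * (1 + (p.1 ⬝ᵥ p.1)^2) := by nlinarith [sq_nonneg (p.1 ⬝ᵥ p.1)]

end Integrability

/-- Exchange a double sum against an integral. -/
lemma sum_integral_swap {Ω : Type*} [MeasurableSpace Ω] (μ : Measure Ω)
    (f : Fin d → Fin d → Ω → ℝ) (c : Fin d → Fin d → ℝ)
    (hint : ∀ i j, Integrable (f i j) μ) :
    ∑ i, ∑ j, (∫ ω, f i j ω ∂μ) * c i j = ∫ ω, ∑ i, ∑ j, f i j ω * c i j ∂μ := by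
  rw [integral_finset_sum _ (fun i _ =>
    integrable_finset_sum _ (fun j _ => (hint i j).mul_const _))]
  refine Finset.sum_congr rfl fun i _ => ?_
  rw [integral_finset_sum _ (fun j _ => (hint i j).mul_const _)]
  exact Finset.sum_congr rfl fun j _ => (integral_mul_const _ _).symm

lemma matExp_entry {Ω : Type*} [MeasurableSpace Ω] (μ : Measure Ω)
    (M : Ω → Matrix (Fin d) (Fin d) ℝ) (i j : Fin d) :
    matExp μ M i j = ∫ ω, M ω i j ∂μ := rfl

lemma quad_matExp {Ω : Type*} [MeasurableSpace Ω] (μ : Measure Ω)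
    (M : Ω → Matrix (Fin d) (Fin d) ℝ)
    (hint : ∀ i j, Integrable (fun ω => M ω i j) μ) (v : Fin d → ℝ) :
    v ⬝ᵥ (matExp μ M) *ᵥ v = ∫ ω, v ⬝ᵥ (M ω) *ᵥ v ∂μ := by
  simp only [quad_eq]
  exact sum_integral_swap μ (fun i j ω => M ω i j) (fun i j => v i * v j) hint

lemma ip_matExp {Ω : Type*} [MeasurableSpace Ω] (μ : Measure Ω)
    (M : Ω → Matrix (Fin d) (Fin d) ℝ)
    (hint : ∀ i j, Integrable (fun ω => M ω i j) μ) (B : Matrix (Fin d) (Fin d) ℝ) :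
    ip (matExp μ M) B = ∫ ω, ip (M ω) B ∂μ := by
  simp only [ip]
  exact sum_integral_swap μ (fun i j ω => M ω i j) (fun i j => B i j) hint

end TbAux
namespace TbAux

variable {d : ℕ}

lemma quad_transpose (A : Matrix (Fin d) (Fin d) ℝ) (x : Fin d → ℝ) :
    x ⬝ᵥ Aᵀ *ᵥ x = x ⬝ᵥ A *ᵥ x := by
  rw [quad_eq, quad_eq, Finset.sum_comm]
  exact Finset.sum_congr rfl fun i _ => Finset.sum_congr rfl fun j _ => by
    rw [transpose_apply]; ring

lemma quad_vecMulVec (x v : Fin d → ℝ) (c : ℝ) :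
    v ⬝ᵥ (c • vecMulVec x x) *ᵥ v = c * (x ⬝ᵥ v)^2 := by
  rw [quad_eq]
  simp only [Matrix.smul_apply, vecMulVec_apply, smul_eq_mul]
  rw [show x ⬝ᵥ v = ∑ i, x i * v i from rfl, sq, Finset.sum_mul_sum, Finset.mul_sum]
  refine Finset.sum_congr rfl fun i _ => ?_
  rw [Finset.mul_sum]
  refine Finset.sum_congr rfl fun j _ => by ring

lemma ip_vecMulVec (x : Fin d → ℝ) (B : Matrix (Fin d) (Fin d) ℝ) (c : ℝ) :
    ip (c • vecMulVec x x) B = c * (x ⬝ᵥ B *ᵥ x) := by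
  rw [ip, quad_eq, Finset.mul_sum]
  refine Finset.sum_congr rfl fun i _ => ?_
  rw [Finset.mul_sum]
  refine Finset.sum_congr rfl fun j _ => ?_
  simp only [Matrix.smul_apply, vecMulVec_apply, smul_eq_mul]
  ring

lemma dot_self_sq (v : Fin d → ℝ) : v ⬝ᵥ v = ∑ i, (v i)^2 := by
  simp [dotProduct, sq]

lemma dot_StS (S : Matrix (Fin d) (Fin d) ℝ) (x : Fin d → ℝ) :
    x ⬝ᵥ (Sᵀ * S) *ᵥ x = (S *ᵥ x) ⬝ᵥ (S *ᵥ x) := by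
  rw [← mulVec_mulVec, dotProduct_mulVec, vecMul_transpose]

lemma cauchy_quad (S : Matrix (Fin d) (Fin d) ℝ) (x : Fin d → ℝ) :
    (x ⬝ᵥ S *ᵥ x)^2 ≤ (x ⬝ᵥ x) * (x ⬝ᵥ (Sᵀ * S) *ᵥ x) := by
  rw [dot_StS, dot_self_sq, dot_self_sq]
  exact Finset.sum_mul_sq_le_sq_mul_sq Finset.univ x (S *ᵥ x)

section WithMeasure

variable (D : Measure ((Fin d → ℝ) × ℝ)) [IsProbabilityMeasure D]
variable (hmom4 : Integrable (fun p : (Fin d → ℝ) × ℝ => (p.1 ⬝ᵥ p.1)^2) D)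

lemma Hmat_sym : (Hmat D)ᵀ = Hmat D := by
  ext i j
  show (Hmat D) j i = Hmat D i j
  simp only [Hmat, matExp_entry, vecMulVec_apply]
  congr 1; funext p; ring

lemma Mop_entry (A : Matrix (Fin d) (Fin d) ℝ) (i j : Fin d) :
    Mop D A i j = ∫ p, (p.1 ⬝ᵥ A *ᵥ p.1) * (p.1 i * p.1 j) ∂D := by
  simp only [Mop, matExp_entry, Matrix.smul_apply, vecMulVec_apply, smul_eq_mul]

lemma MI_entry (i j : Fin d) :
    MI D i j = ∫ p, (p.1 ⬝ᵥ p.1) * (p.1 i * p.1 j) ∂D := by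
  simp only [MI, matExp_entry, Matrix.smul_apply, vecMulVec_apply, smul_eq_mul]

lemma Mop_symm (A : Matrix (Fin d) (Fin d) ℝ) : (Mop D A)ᵀ = Mop D A := by
  ext i j
  show Mop D A j i = Mop D A i j
  rw [Mop_entry, Mop_entry]
  congr 1; funext p; ring

lemma Mop_transpose_arg (A : Matrix (Fin d) (Fin d) ℝ) : Mop D Aᵀ = Mop D A := by
  ext i j
  rw [Mop_entry, Mop_entry]
  congr 1; funext p; rw [quad_transpose]

include hmom4

lemma Mop_add (A B : Matrix (Fin d) (Fin d) ℝ) :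
    Mop D (A + B) = Mop D A + Mop D B := by
  ext i j
  rw [Matrix.add_apply, Mop_entry, Mop_entry, Mop_entry,
    ← integral_add (int_quad_entry D hmom4 A i j) (int_quad_entry D hmom4 B i j)]
  congr 1; funext p
  rw [add_mulVec, dotProduct_add]
  ring

lemma Mop_smul (c : ℝ) (A : Matrix (Fin d) (Fin d) ℝ) :
    Mop D (c • A) = c • Mop D A := by
  ext i j
  rw [Matrix.smul_apply, Mop_entry, Mop_entry, smul_eq_mul, ← integral_const_mul]
  congr 1; funext p
  rw [smul_mulVec, dotProduct_smul, smul_eq_mul]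
  ring

omit hmom4

lemma Mop_antisym {N : Matrix (Fin d) (Fin d) ℝ} (hN : Nᵀ = -N) : Mop D N = 0 := by
  have hq : ∀ x : Fin d → ℝ, x ⬝ᵥ N *ᵥ x = 0 := by
    intro x
    have h1 : x ⬝ᵥ Nᵀ *ᵥ x = x ⬝ᵥ N *ᵥ x := quad_transpose N x
    rw [hN, neg_mulVec, dotProduct_neg] at h1
    linarith
  ext i j
  rw [Mop_entry, Matrix.zero_apply]
  simp [hq]

lemma Mop_quad (A : Matrix (Fin d) (Fin d) ℝ) (v : Fin d → ℝ)
    (hint : ∀ i j, Integrable (fun p : (Fin d → ℝ) × ℝ =>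
      (p.1 ⬝ᵥ A *ᵥ p.1) * (p.1 i * p.1 j)) D) :
    v ⬝ᵥ (Mop D A) *ᵥ v = ∫ p, (p.1 ⬝ᵥ A *ᵥ p.1) * (p.1 ⬝ᵥ v)^2 ∂D := by
  rw [Mop, quad_matExp]
  · congr 1; funext p; rw [quad_vecMulVec]
  · intro i j
    have := hint i j
    apply this.congr
    filter_upwards with p
    simp only [Matrix.smul_apply, vecMulVec_apply, smul_eq_mul]
    try ring

lemma ip_Mop_self (A : Matrix (Fin d) (Fin d) ℝ)
    (hint : ∀ i j, Integrable (fun p : (Fin d → ℝ) × ℝ =>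
      (p.1 ⬝ᵥ A *ᵥ p.1) * (p.1 i * p.1 j)) D) :
    ip (Mop D A) A = ∫ p, (p.1 ⬝ᵥ A *ᵥ p.1)^2 ∂D := by
  rw [Mop, ip_matExp]
  · congr 1; funext p; rw [ip_vecMulVec]; ring
  · intro i j
    apply (hint i j).congr
    filter_upwards with p
    simp only [Matrix.smul_apply, vecMulVec_apply, smul_eq_mul]
    try ring

lemma ip_MI (B : Matrix (Fin d) (Fin d) ℝ)
    (hint : ∀ i j, Integrable (fun p : (Fin d → ℝ) × ℝ =>
      (p.1 ⬝ᵥ p.1) * (p.1 i * p.1 j)) D) :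
    ip (MI D) B = ∫ p, (p.1 ⬝ᵥ p.1) * (p.1 ⬝ᵥ B *ᵥ p.1) ∂D := by
  rw [MI, ip_matExp]
  · congr 1; funext p; rw [ip_vecMulVec]
  · intro i j
    apply (hint i j).congr
    filter_upwards with p
    simp only [Matrix.smul_apply, vecMulVec_apply, smul_eq_mul]
    try ring

end WithMeasure

end TbAux
namespace TbAux

variable {d : ℕ}

lemma ip_HS (H S : Matrix (Fin d) (Fin d) ℝ) : ip S (H * S) = en H S := by
  rw [ip_trace, ← Matrix.mul_assoc, en]

lemma ip_SH_normal {S : Matrix (Fin d) (Fin d) ℝ} (H : Matrix (Fin d) (Fin d) ℝ)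
    (h : S * Sᵀ = Sᵀ * S) : ip S (S * H) = en H S := by
  calc ip S (S * H) = ((Sᵀ * S) * H).trace := by rw [ip_trace, Matrix.mul_assoc]
    _ = (H * (Sᵀ * S)).trace := trace_mul_comm _ _
    _ = (H * (S * Sᵀ)).trace := by rw [h]
    _ = ((H * S) * Sᵀ).trace := by rw [Matrix.mul_assoc]
    _ = (Sᵀ * (H * S)).trace := trace_mul_comm _ _
    _ = en H S := by rw [en, Matrix.mul_assoc]

lemma trace_mul_H_le {P H : Matrix (Fin d) (Fin d) ℝ} {t : ℝ} (hP : P.PosSemidef)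
    (hB : (t • (1 : Matrix (Fin d) (Fin d) ℝ) - H).PosSemidef) :
    (P * H).trace ≤ t * P.trace := by
  have h := trace_mul_psd_nonneg hP hB
  have h2 : P * (t • (1 : Matrix (Fin d) (Fin d) ℝ) - H) = t • P - P * H := by
    rw [Matrix.mul_sub, Matrix.mul_smul, Matrix.mul_one]
  rw [h2, trace_sub, trace_smul, smul_eq_mul] at h
  linarith

lemma ip_HSH_le {H S : Matrix (Fin d) (Fin d) ℝ} {t : ℝ} (hH : H.PosSemidef)
    (hB : (t • (1 : Matrix (Fin d) (Fin d) ℝ) - H).PosSemidef) :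
    ip S (H * S * H) ≤ t * en H S := by
  have h1 : ip S (H * S * H) = ((Sᵀ * H * S) * H).trace := by
    rw [ip_trace, ← Matrix.mul_assoc, ← Matrix.mul_assoc]
  rw [h1]
  exact trace_mul_H_le (en_psd hH S) hB

section WithMeasure

variable (D : Measure ((Fin d → ℝ) × ℝ)) [IsProbabilityMeasure D]
variable (hmom4 : Integrable (fun p : (Fin d → ℝ) × ℝ => (p.1 ⬝ᵥ p.1)^2) D)

include hmom4

lemma TopB_add (γ : ℝ) (b : ℕ) (A B : Matrix (Fin d) (Fin d) ℝ) :
    TopB D γ b (A + B) = TopB D γ b A + TopB D γ b B := by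
  simp only [TopB, Mop_add D hmom4, Matrix.mul_add, Matrix.add_mul, smul_add]
  abel

lemma TopB_smul (γ : ℝ) (b : ℕ) (c : ℝ) (A : Matrix (Fin d) (Fin d) ℝ) :
    TopB D γ b (c • A) = c • TopB D γ b A := by
  simp only [TopB, Mop_smul D hmom4, Matrix.mul_smul, Matrix.smul_mul, smul_sub, smul_add,
    smul_smul, mul_comm]

omit hmom4

lemma TopB_transpose (γ : ℝ) (b : ℕ) (A : Matrix (Fin d) (Fin d) ℝ) :
    (TopB D γ b A)ᵀ = TopB D γ b Aᵀ := by
  simp only [TopB, transpose_sub, transpose_add, transpose_smul, transpose_mul,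
    Mop_symm, Mop_transpose_arg, Hmat_sym, Matrix.mul_assoc]
  abel

include hmom4

/-- Quadratic-form lower bound on the symmetric part. -/
lemma qform_sym {Hnorm Rsq : ℝ}
    (hHn : (Hnorm • (1 : Matrix (Fin d) (Fin d) ℝ) - Hmat D).PosSemidef)
    (hRn : (Rsq • Hmat D - MI D).PosSemidef)
    (hHpsd : (Hmat D).PosSemidef)
    {γ : ℝ} {b : ℕ} (hγ0 : 0 ≤ γ) (hb : 1 ≤ b)
    {S : Matrix (Fin d) (Fin d) ℝ} (hS : Sᵀ = S) :
    (2 - γ * (Rsq + ((b:ℝ) - 1) * Hnorm) / b) * en (Hmat D) S ≤ ip S (TopB D γ b S) := by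
  set H := Hmat D with hHdef
  have hb0 : (0:ℝ) < b := by exact_mod_cast hb
  -- expand the pairing
  have hexp : ip S (TopB D γ b S) =
      ip S (H * S) + ip S (S * H) - (γ / b) * ip S (Mop D S)
        - (γ * ((b:ℝ) - 1) / b) * ip S (H * S * H) := by
    rw [TopB, ip_sub_right, ip_sub_right, ip_add_right, ip_smul_right, ip_smul_right]
  -- the four pieces
  have h1 : ip S (H * S) = en H S := ip_HS H S
  have h2 : ip S (S * H) = en H S := ip_SH_normal H (by rw [hS])
  have hMop : ip S (Mop D S) = ∫ p, (p.1 ⬝ᵥ S *ᵥ p.1)^2 ∂D := by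
    rw [ip_comm]
    exact ip_Mop_self D S (int_quad_entry D hmom4 S)
  -- Cauchy-Schwarz + R² bound
  have hSS : (Sᵀ * S).PosSemidef := by
    have := Matrix.posSemidef_conjTranspose_mul_self S
    rwa [conjT] at this
  have hCS : ∫ p, (p.1 ⬝ᵥ S *ᵥ p.1)^2 ∂D ≤ Rsq * en H S := by
    have hmono : ∫ p, (p.1 ⬝ᵥ S *ᵥ p.1)^2 ∂D
        ≤ ∫ p, (p.1 ⬝ᵥ p.1) * (p.1 ⬝ᵥ (Sᵀ * S) *ᵥ p.1) ∂D :=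
      integral_mono (int_quad_sq D hmom4 S) (int_dot_quad D hmom4 (Sᵀ * S))
        (fun p => cauchy_quad S p.1)
    have heq : ∫ p, (p.1 ⬝ᵥ p.1) * (p.1 ⬝ᵥ (Sᵀ * S) *ᵥ p.1) ∂D = ip (MI D) (Sᵀ * S) :=
      (ip_MI D (Sᵀ * S) (int_dot_entry D hmom4)).symm
    have hub : ip (MI D) (Sᵀ * S) ≤ Rsq * ip (Sᵀ * S) H := by
      have h0 := ip_psd_nonneg hRn hSS
      have hexp2 : ip (Rsq • H - MI D) (Sᵀ * S)
          = Rsq * ip (Sᵀ * S) H - ip (MI D) (Sᵀ * S) := by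
        rw [ip_comm, ip_sub_right, ip_smul_right, ip_comm (Sᵀ * S) (MI D)]
      rw [hexp2] at h0
      linarith
    have hiph : ip (Sᵀ * S) H = en H S := by
      rw [ip_trace, transpose_mul, transpose_transpose, hS]
      calc ((S * S) * H).trace = (S * (S * H)).trace := by rw [Matrix.mul_assoc]
        _ = ((S * H) * S).trace := trace_mul_comm _ _
        _ = en H S := by rw [en, hS, Matrix.mul_assoc]
    rw [heq] at hmono
    rw [hiph] at hub
    linarith
  have hHSH : ip S (H * S * H) ≤ Hnorm * en H S := ip_HSH_le hHpsd hHn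
  have hen : 0 ≤ en H S := en_nonneg hHpsd S
  have hc1 : 0 ≤ γ / b := div_nonneg hγ0 (le_of_lt hb0)
  have hc2 : 0 ≤ γ * ((b:ℝ) - 1) / b := by
    apply div_nonneg _ (le_of_lt hb0)
    apply mul_nonneg hγ0
    have : (1:ℝ) ≤ b := by exact_mod_cast hb
    linarith
  rw [hexp, h1, h2, hMop]
  have e1 : (γ / b) * (∫ p, (p.1 ⬝ᵥ S *ᵥ p.1)^2 ∂D) ≤ (γ / b) * (Rsq * en H S) :=
    mul_le_mul_of_nonneg_left hCS hc1
  have e2 : (γ * ((b:ℝ) - 1) / b) * ip S (H * S * H)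
      ≤ (γ * ((b:ℝ) - 1) / b) * (Hnorm * en H S) :=
    mul_le_mul_of_nonneg_left hHSH hc2
  have ekey : 2 * en H S - (γ / b) * (Rsq * en H S)
      - (γ * ((b:ℝ) - 1) / b) * (Hnorm * en H S)
      = (2 - γ * (Rsq + ((b:ℝ) - 1) * Hnorm) / b) * en H S := by
    field_simp
    ring
  nlinarith [e1, e2]

/-- Quadratic-form lower bound on the antisymmetric part. -/
lemma qform_anti {Hnorm : ℝ}
    (hHn : (Hnorm • (1 : Matrix (Fin d) (Fin d) ℝ) - Hmat D).PosSemidef)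
    (hHpsd : (Hmat D).PosSemidef)
    {γ : ℝ} {b : ℕ} (hγ0 : 0 ≤ γ) (hb : 1 ≤ b)
    {N : Matrix (Fin d) (Fin d) ℝ} (hN : Nᵀ = -N) :
    (2 - γ * (((b:ℝ) - 1) * Hnorm) / b) * en (Hmat D) N ≤ ip N (TopB D γ b N) := by
  set H := Hmat D with hHdef
  have hb0 : (0:ℝ) < b := by exact_mod_cast hb
  have hexp : ip N (TopB D γ b N) =
      ip N (H * N) + ip N (N * H) - (γ / b) * ip N (Mop D N)
        - (γ * ((b:ℝ) - 1) / b) * ip N (H * N * H) := by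
    rw [TopB, ip_sub_right, ip_sub_right, ip_add_right, ip_smul_right, ip_smul_right]
  have h1 : ip N (H * N) = en H N := ip_HS H N
  have h2 : ip N (N * H) = en H N := ip_SH_normal H (by rw [hN, Matrix.neg_mul, Matrix.mul_neg])
  have hMop : ip N (Mop D N) = 0 := by
    rw [Mop_antisym D hN]
    simp [ip]
  have hHNH : ip N (H * N * H) ≤ Hnorm * en H N := ip_HSH_le hHpsd hHn
  have hen : 0 ≤ en H N := en_nonneg hHpsd N
  have hc2 : 0 ≤ γ * ((b:ℝ) - 1) / b := by
    apply div_nonneg _ (le_of_lt hb0)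
    apply mul_nonneg hγ0
    have : (1:ℝ) ≤ b := by exact_mod_cast hb
    linarith
  rw [hexp, h1, h2, hMop]
  have e2 : (γ * ((b:ℝ) - 1) / b) * ip N (H * N * H)
      ≤ (γ * ((b:ℝ) - 1) / b) * (Hnorm * en H N) :=
    mul_le_mul_of_nonneg_left hHNH hc2
  have ekey : 2 * en H N - (γ * ((b:ℝ) - 1) / b) * (Hnorm * en H N)
      = (2 - γ * (((b:ℝ) - 1) * Hnorm) / b) * en H N := by
    field_simp
  nlinarith [e2]

end WithMeasure

end TbAux
namespace TbAux

variable {d : ℕ}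

lemma dot_pos {v : Fin d → ℝ} (hv : v ≠ 0) : 0 < v ⬝ᵥ v := by
  rcases lt_or_eq_of_le (dot_nonneg v) with h | h
  · exact h
  · exfalso; apply hv
    funext i
    have h0 : ∀ i ∈ (Finset.univ : Finset (Fin d)), (0:ℝ) ≤ v i * v i :=
      fun i _ => mul_self_nonneg _
    have := (Finset.sum_eq_zero_iff_of_nonneg h0).mp h.symm i (Finset.mem_univ i)
    simpa using mul_self_eq_zero.mp this

lemma quad_smul (M : Matrix (Fin d) (Fin d) ℝ) (v : Fin d → ℝ) (a : ℝ) :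
    (a • v) ⬝ᵥ M *ᵥ (a • v) = a^2 * (v ⬝ᵥ M *ᵥ v) := by
  rw [quad_eq, quad_eq, Finset.mul_sum]
  refine Finset.sum_congr rfl fun i _ => ?_
  rw [Finset.mul_sum]
  refine Finset.sum_congr rfl fun j _ => ?_
  simp only [Pi.smul_apply, smul_eq_mul]
  ring

lemma cont_quad_vec (M : Matrix (Fin d) (Fin d) ℝ) :
    Continuous fun v : Fin d → ℝ => v ⬝ᵥ M *ᵥ v := by
  simp only [quad_eq]
  refine continuous_finset_sum _ fun i _ => continuous_finset_sum _ fun j _ =>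
    continuous_const.mul ((continuous_apply i).mul (continuous_apply j))

/-- A positive definite matrix dominates a positive multiple of the identity form. -/
lemma pd_lower (hd : 1 ≤ d) {M : Matrix (Fin d) (Fin d) ℝ} (hM : M.PosDef) :
    ∃ c > (0:ℝ), ∀ v : Fin d → ℝ, c * (v ⬝ᵥ v) ≤ v ⬝ᵥ M *ᵥ v := by
  set S : Set (Fin d → ℝ) := {v | v ⬝ᵥ v = 1} with hSdef
  have hdot_cont : Continuous fun v : Fin d → ℝ => v ⬝ᵥ v :=
    continuous_finset_sum _ fun i _ => (continuous_apply i).mul (continuous_apply i)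
  have hclosed : IsClosed S := isClosed_singleton.preimage hdot_cont
  have hbdd : Bornology.IsBounded S := by
    apply (Metric.isBounded_closedBall (x := (0 : Fin d → ℝ)) (r := 1)).subset
    intro v hv
    simp only [Metric.mem_closedBall, dist_zero_right]
    rw [pi_norm_le_iff_of_nonneg zero_le_one]
    intro i
    rw [Real.norm_eq_abs]
    have h1 : v i * v i ≤ 1 := by
      have := sq_le_dot v i
      rw [hv] at this  -- hv : v ⬝ᵥ v = 1 ? membership
      exact this
    exact abs_le_one_iff_mul_self_le_one.mpr h1
  have hcompact : IsCompact S := Metric.isCompact_of_isClosed_isBounded hclosed hbdd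
  have hne : S.Nonempty := by
    refine ⟨Pi.single ⟨0, hd⟩ 1, ?_⟩
    show Pi.single (⟨0, hd⟩ : Fin d) (1:ℝ) ⬝ᵥ Pi.single ⟨0, hd⟩ 1 = 1
    simp [dotProduct, Pi.single_apply]
  obtain ⟨v₀, hv₀S, hmin⟩ := hcompact.exists_isMinOn hne (cont_quad_vec M).continuousOn
  have hv₀ne : v₀ ≠ 0 := by
    intro h
    rw [hSdef] at hv₀S
    simp only [Set.mem_setOf_eq, h] at hv₀S
    simp [dotProduct] at hv₀S
  have hc : 0 < v₀ ⬝ᵥ M *ᵥ v₀ := by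
    have := hM.dotProduct_mulVec_pos hv₀ne
    rwa [star_vec] at this
  refine ⟨v₀ ⬝ᵥ M *ᵥ v₀, hc, fun v => ?_⟩
  by_cases hv : v = 0
  · simp [hv]
  · have hdv : 0 < v ⬝ᵥ v := dot_pos hv
    set r : ℝ := Real.sqrt (v ⬝ᵥ v) with hr
    have hr0 : 0 < r := Real.sqrt_pos.mpr hdv
    have hr2 : r^2 = v ⬝ᵥ v := Real.sq_sqrt (le_of_lt hdv)
    have humem : (r⁻¹ • v) ∈ S := by
      show (r⁻¹ • v) ⬝ᵥ (r⁻¹ • v) = 1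
      rw [smul_dotProduct, dotProduct_smul, smul_eq_mul, smul_eq_mul,
        show v ⬝ᵥ v = r^2 from hr2.symm]
      field_simp
    have hu := hmin humem
    simp only [Set.mem_setOf_eq] at hu
    rw [quad_smul] at hu
    have h2 : (r⁻¹)^2 = (v ⬝ᵥ v)⁻¹ := by rw [inv_pow, hr2]
    rw [h2] at hu
    have hmul := mul_le_mul_of_nonneg_right hu (le_of_lt hdv)
    have heq : (v ⬝ᵥ v)⁻¹ * (v ⬝ᵥ M *ᵥ v) * (v ⬝ᵥ v) = v ⬝ᵥ M *ᵥ v := by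
      field_simp
    linarith

section WithMeasure

variable (D : Measure ((Fin d → ℝ) × ℝ)) [IsProbabilityMeasure D]
variable (hmom4 : Integrable (fun p : (Fin d → ℝ) × ℝ => (p.1 ⬝ᵥ p.1)^2) D)

include hmom4

/-- `TopB` as a linear map. -/
def Tlin (γ : ℝ) (b : ℕ) : Matrix (Fin d) (Fin d) ℝ →ₗ[ℝ] Matrix (Fin d) (Fin d) ℝ where
  toFun := TopB D γ b
  map_add' := TopB_add D hmom4 γ b
  map_smul' := fun c A => TopB_smul D hmom4 γ b c A

/-- The homotopy `U_s = (1-s)•id + s•T`. -/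
def Ulin (γ : ℝ) (b : ℕ) (s : ℝ) :
    Matrix (Fin d) (Fin d) ℝ →ₗ[ℝ] Matrix (Fin d) (Fin d) ℝ :=
  (1 - s) • LinearMap.id + s • Tlin D hmom4 γ b

lemma Tlin_apply (γ : ℝ) (b : ℕ) (A : Matrix (Fin d) (Fin d) ℝ) :
    Tlin D hmom4 γ b A = TopB D γ b A := rfl

lemma Ulin_apply (γ : ℝ) (b : ℕ) (s : ℝ) (A : Matrix (Fin d) (Fin d) ℝ) :
    Ulin D hmom4 γ b s A = (1 - s) • A + s • TopB D γ b A := rfl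

lemma TopB_neg (γ : ℝ) (b : ℕ) (A : Matrix (Fin d) (Fin d) ℝ) :
    TopB D γ b (-A) = -TopB D γ b A := by
  have := TopB_smul D hmom4 γ b (-1) A
  simpa using this

/-- Positivity of the quadratic form of `T`. -/
lemma ipT_pos {Hnorm Rsq : ℝ}
    (hHn : (Hnorm • (1 : Matrix (Fin d) (Fin d) ℝ) - Hmat D).PosSemidef)
    (hRn : (Rsq • Hmat D - MI D).PosSemidef)
    (hHpd : (Hmat D).PosDef) (hRsq0 : 0 ≤ Rsq)
    {γ : ℝ} {b : ℕ} (hγ0 : 0 ≤ γ) (hb : 1 ≤ b)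
    (hq : γ * (Rsq + ((b:ℝ) - 1) * Hnorm) / b < 2)
    {A : Matrix (Fin d) (Fin d) ℝ} (hA : A ≠ 0) :
    0 < ip A (TopB D γ b A) := by
  have hb0 : (0:ℝ) < b := by exact_mod_cast hb
  set S := (2⁻¹ : ℝ) • (A + Aᵀ) with hSdef
  set N := (2⁻¹ : ℝ) • (A - Aᵀ) with hNdef
  have hS : Sᵀ = S := by
    rw [hSdef, transpose_smul, transpose_add, transpose_transpose, add_comm]
  have hN : Nᵀ = -N := by
    rw [hNdef, transpose_smul, transpose_sub, transpose_transpose, ← smul_neg, neg_sub]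
  have hSN : S + N = A := by
    rw [hSdef, hNdef, ← smul_add]
    have : A + Aᵀ + (A - Aᵀ) = (2:ℝ) • A := by
      rw [two_smul]; abel
    rw [this, smul_smul]
    norm_num
  have hTadd : TopB D γ b A = TopB D γ b S + TopB D γ b N := by
    rw [← hSN, TopB_add D hmom4]
  have hTSsym : (TopB D γ b S)ᵀ = TopB D γ b S := by
    rw [TopB_transpose, hS]
  have hTNanti : (TopB D γ b N)ᵀ = -TopB D γ b N := by
    rw [TopB_transpose, hN, TopB_neg D hmom4]
  have hsplit : ip A (TopB D γ b A) = ip S (TopB D γ b S) + ip N (TopB D γ b N) := by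
    rw [hTadd, ← hSN]
    rw [ip_comm, ip_add_right, ip_comm (TopB D γ b S + TopB D γ b N) S,
      ip_comm (TopB D γ b S + TopB D γ b N) N, ip_add_right, ip_add_right]
    have c1 : ip S (TopB D γ b N) = 0 := ip_sym_antisym _ _ hS hTNanti
    have c2 : ip N (TopB D γ b S) = 0 := by
      rw [ip_comm]; exact ip_sym_antisym _ _ hTSsym hN
    linarith
  have hqs := qform_sym D hmom4 hHn hRn hHpd.posSemidef hγ0 hb hS
  have hqa := qform_anti D hmom4 hHn hHpd.posSemidef hγ0 hb hN
  set cs := 2 - γ * (Rsq + ((b:ℝ) - 1) * Hnorm) / b with hcs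
  set ca := 2 - γ * (((b:ℝ) - 1) * Hnorm) / b with hca
  have hcs0 : 0 < cs := by rw [hcs]; linarith
  have hcsa : cs ≤ ca := by
    rw [hcs, hca]
    have h1 : γ * (Rsq + ((b:ℝ) - 1) * Hnorm) / b
        = γ * Rsq / b + γ * (((b:ℝ) - 1) * Hnorm) / b := by
      field_simp
    have h2 : 0 ≤ γ * Rsq / b := div_nonneg (mul_nonneg hγ0 hRsq0) (le_of_lt hb0)
    linarith
  have henS : 0 ≤ en (Hmat D) S := en_nonneg hHpd.posSemidef S
  have henN : 0 ≤ en (Hmat D) N := en_nonneg hHpd.posSemidef N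
  rw [hsplit]
  by_cases hS0 : S = 0
  · have hN0 : N ≠ 0 := by
      intro h
      apply hA
      rw [← hSN, hS0, h, add_zero]
    have hT0 : TopB D γ b (0 : Matrix (Fin d) (Fin d) ℝ) = 0 := by
      have h := TopB_smul D hmom4 γ b 0 (0 : Matrix (Fin d) (Fin d) ℝ)
      simpa using h
    have hSz : ip S (TopB D γ b S) = 0 := by
      rw [hS0, hT0]
      simp [ip]
    have henN' : 0 < en (Hmat D) N := en_pos hHpd hN0
    nlinarith
  · have henS' : 0 < en (Hmat D) S := en_pos hHpd hS0
    nlinarith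

/-- boundary lemma: at a PSD matrix with null vector the form is nonpositive -/
lemma quad_TopB_le {γ : ℝ} {b : ℕ} (hγ0 : 0 ≤ γ) (hb : 1 ≤ b)
    (hHsym : (Hmat D)ᵀ = Hmat D)
    {B : Matrix (Fin d) (Fin d) ℝ} (hB : B.PosSemidef) {v : Fin d → ℝ}
    (hv : B *ᵥ v = 0) :
    v ⬝ᵥ (TopB D γ b B) *ᵥ v ≤ 0 := by
  have hb0 : (0:ℝ) < b := by exact_mod_cast hb
  have hBsym : Bᵀ = B := by rw [← conjT, hB.1]
  set H := Hmat D with hH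
  have t1 : v ⬝ᵥ (H * B) *ᵥ v = 0 := by
    rw [← mulVec_mulVec, hv, mulVec_zero, dotProduct_zero]
  have t2 : v ⬝ᵥ (B * H) *ᵥ v = 0 := by
    rw [← mulVec_mulVec, dotProduct_mulVec]
    have : v ᵥ* B = B *ᵥ v := by rw [← hBsym, vecMul_transpose, hBsym]
    rw [this, hv, zero_dotProduct]
  have t3 : 0 ≤ v ⬝ᵥ (H * B * H) *ᵥ v := by
    rw [Matrix.mul_assoc, ← mulVec_mulVec, dotProduct_mulVec,
      show v ᵥ* H = H *ᵥ v from by rw [← hHsym, vecMul_transpose, hHsym],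
      ← mulVec_mulVec]
    exact psd_quad_nonneg hB (H *ᵥ v)
  have t4 : 0 ≤ v ⬝ᵥ (Mop D B) *ᵥ v := by
    rw [Mop_quad D B v (int_quad_entry D hmom4 B)]
    apply integral_nonneg
    intro p
    have h1 : 0 ≤ p.1 ⬝ᵥ B *ᵥ p.1 := psd_quad_nonneg hB p.1
    positivity
  have hc1 : 0 ≤ γ / b := div_nonneg hγ0 (le_of_lt hb0)
  have hc2 : 0 ≤ γ * ((b:ℝ) - 1) / b := by
    apply div_nonneg _ (le_of_lt hb0)
    apply mul_nonneg hγ0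
    have : (1:ℝ) ≤ b := by exact_mod_cast hb
    linarith
  have hexp : v ⬝ᵥ (TopB D γ b B) *ᵥ v
      = v ⬝ᵥ (H * B) *ᵥ v + v ⬝ᵥ (B * H) *ᵥ v - (γ / b) * (v ⬝ᵥ (Mop D B) *ᵥ v)
        - (γ * ((b:ℝ) - 1) / b) * (v ⬝ᵥ (H * B * H) *ᵥ v) := by
    rw [TopB, Matrix.sub_mulVec, Matrix.sub_mulVec, Matrix.add_mulVec,
      dotProduct_sub, dotProduct_sub, dotProduct_add, smul_mulVec,
      smul_mulVec, dotProduct_smul, dotProduct_smul, smul_eq_mul, smul_eq_mul]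
  rw [hexp, t1, t2]
  nlinarith [mul_nonneg hc1 t4, mul_nonneg hc2 t3]

end WithMeasure

end TbAux
namespace TbAux

variable {d : ℕ}

/-- standard basis of the matrix space -/
def bas (d : ℕ) : Module.Basis (Fin d × Fin d) ℝ (Matrix (Fin d) (Fin d) ℝ) :=
  Matrix.stdBasis ℝ (Fin d) (Fin d)

lemma equivFun_symm_entry (u : Fin d × Fin d → ℝ) (i j : Fin d) :
    ((bas d).equivFun.symm u) i j = ∑ k, u k * ((bas d) k) i j := by
  rw [Module.Basis.equivFun_symm_apply]
  rw [Matrix.sum_apply]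
  exact Finset.sum_congr rfl fun k _ => by simp [Matrix.smul_apply]

lemma cont_evalF (w : Fin d × Fin d → ℝ) (i j : Fin d) :
    Continuous fun M : Matrix (Fin d × Fin d) (Fin d × Fin d) ℝ =>
      ((bas d).equivFun.symm (M *ᵥ w)) i j := by
  simp only [equivFun_symm_entry]
  refine continuous_finset_sum _ fun k _ => Continuous.mul ?_ continuous_const
  show Continuous fun M : Matrix (Fin d × Fin d) (Fin d × Fin d) ℝ => (M *ᵥ w) k
  simp only [mulVec, dotProduct]
  refine continuous_finset_sum _ fun l _ => Continuous.mul ?_ continuous_const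
  exact (continuous_apply l).comp (continuous_apply k)

lemma equivFun_map (f : Matrix (Fin d) (Fin d) ℝ →ₗ[ℝ] Matrix (Fin d) (Fin d) ℝ)
    (X : Matrix (Fin d) (Fin d) ℝ) :
    (bas d).equivFun (f X) = (LinearMap.toMatrix (bas d) (bas d) f) *ᵥ ((bas d).equivFun X) := by
  rw [Module.Basis.equivFun_apply, Module.Basis.equivFun_apply, LinearMap.toMatrix_mulVec_repr]

section WithMeasure

variable (D : Measure ((Fin d → ℝ) × ℝ)) [IsProbabilityMeasure D]
variable (hmom4 : Integrable (fun p : (Fin d → ℝ) × ℝ => (p.1 ⬝ᵥ p.1)^2) D)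

include hmom4

lemma Ulin_transpose (γ : ℝ) (b : ℕ) (s : ℝ) (A : Matrix (Fin d) (Fin d) ℝ) :
    (Ulin D hmom4 γ b s A)ᵀ = Ulin D hmom4 γ b s Aᵀ := by
  rw [Ulin_apply, Ulin_apply, transpose_add, transpose_smul, transpose_smul,
    TopB_transpose]

lemma Ulin_inj {Hnorm Rsq : ℝ}
    (hHn : (Hnorm • (1 : Matrix (Fin d) (Fin d) ℝ) - Hmat D).PosSemidef)
    (hRn : (Rsq • Hmat D - MI D).PosSemidef)
    (hHpd : (Hmat D).PosDef) (hRsq0 : 0 ≤ Rsq)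
    {γ : ℝ} {b : ℕ} (hγ0 : 0 ≤ γ) (hb : 1 ≤ b)
    (hq : γ * (Rsq + ((b:ℝ) - 1) * Hnorm) / b < 2)
    {s : ℝ} (hs : s ∈ Set.Icc (0:ℝ) 1) :
    Function.Injective (Ulin D hmom4 γ b s) := by
  intro x y hxy
  by_contra hne
  have hA : x - y ≠ 0 := sub_ne_zero.mpr hne
  have h0 : Ulin D hmom4 γ b s (x - y) = 0 := by
    rw [map_sub, hxy, sub_self]
  have hq2 : 0 < ip (x - y) (Ulin D hmom4 γ b s (x - y)) := by
    rw [Ulin_apply, ip_add_right, ip_smul_right, ip_smul_right]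
    have haa : 0 < ip (x - y) (x - y) := ip_self_pos _ hA
    have hat : 0 < ip (x - y) (TopB D γ b (x - y)) :=
      ipT_pos D hmom4 hHn hRn hHpd hRsq0 hγ0 hb hq hA
    rcases eq_or_lt_of_le hs.1 with h | h
    · rw [← h]; simpa using haa
    · have h1 : 0 < s * ip (x - y) (TopB D γ b (x - y)) := mul_pos h hat
      have h2 : 0 ≤ (1 - s) * ip (x - y) (x - y) :=
        mul_nonneg (by linarith [hs.2]) (le_of_lt haa)
      linarith
  rw [h0] at hq2
  simp [ip] at hq2

lemma Ulin_bij {Hnorm Rsq : ℝ}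
    (hHn : (Hnorm • (1 : Matrix (Fin d) (Fin d) ℝ) - Hmat D).PosSemidef)
    (hRn : (Rsq • Hmat D - MI D).PosSemidef)
    (hHpd : (Hmat D).PosDef) (hRsq0 : 0 ≤ Rsq)
    {γ : ℝ} {b : ℕ} (hγ0 : 0 ≤ γ) (hb : 1 ≤ b)
    (hq : γ * (Rsq + ((b:ℝ) - 1) * Hnorm) / b < 2)
    {s : ℝ} (hs : s ∈ Set.Icc (0:ℝ) 1) :
    Function.Bijective (Ulin D hmom4 γ b s) := by
  have hinj := Ulin_inj D hmom4 hHn hRn hHpd hRsq0 hγ0 hb hq hs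
  exact ⟨hinj, LinearMap.injective_iff_surjective.mp hinj⟩

/-- matrix of the homotopy operator -/
def Nmat (γ : ℝ) (b : ℕ) (s : ℝ) : Matrix (Fin d × Fin d) (Fin d × Fin d) ℝ :=
  LinearMap.toMatrix (bas d) (bas d) (Ulin D hmom4 γ b s)

lemma Nmat_affine (γ : ℝ) (b : ℕ) (s : ℝ) :
    Nmat D hmom4 γ b s = (1 - s) • (1 : Matrix (Fin d × Fin d) (Fin d × Fin d) ℝ)
      + s • (LinearMap.toMatrix (bas d) (bas d) (Tlin D hmom4 γ b)) := by
  rw [Nmat, Ulin, map_add, _root_.map_smul, _root_.map_smul, LinearMap.toMatrix_id]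

lemma cont_Nmat (γ : ℝ) (b : ℕ) : Continuous fun s => Nmat D hmom4 γ b s := by
  apply continuous_matrix
  intro k l
  simp only [Nmat_affine, Matrix.add_apply, Matrix.smul_apply, smul_eq_mul]
  fun_prop

lemma Nmat_unit (γ : ℝ) (b : ℕ) (s : ℝ)
    (hbij : Function.Bijective (Ulin D hmom4 γ b s)) :
    IsUnit (Nmat D hmom4 γ b s).det := by
  set e := LinearEquiv.ofBijective (Ulin D hmom4 γ b s) hbij
  have h1 : (Ulin D hmom4 γ b s) ∘ₗ (e.symm : Matrix (Fin d) (Fin d) ℝ →ₗ[ℝ]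
      Matrix (Fin d) (Fin d) ℝ) = LinearMap.id := by
    apply LinearMap.ext
    intro x
    simp [e]
  apply Matrix.isUnit_det_of_right_inverse (B := LinearMap.toMatrix (bas d) (bas d)
    (e.symm : Matrix (Fin d) (Fin d) ℝ →ₗ[ℝ] Matrix (Fin d) (Fin d) ℝ))
  rw [Nmat, ← LinearMap.toMatrix_comp, h1, LinearMap.toMatrix_id]

/-- the solution path -/
def gpath (γ : ℝ) (b : ℕ) (W' : Matrix (Fin d) (Fin d) ℝ) (s : ℝ) :
    Matrix (Fin d) (Fin d) ℝ :=
  (bas d).equivFun.symm ((Nmat D hmom4 γ b s)⁻¹ *ᵥ ((bas d).equivFun W'))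

lemma gpath_eq (γ : ℝ) (b : ℕ) (W' : Matrix (Fin d) (Fin d) ℝ) (s : ℝ)
    (hunit : IsUnit (Nmat D hmom4 γ b s).det) :
    Ulin D hmom4 γ b s (gpath D hmom4 γ b W' s) = W' := by
  apply (bas d).equivFun.injective
  rw [equivFun_map, gpath, LinearEquiv.apply_symm_apply, mulVec_mulVec]
  rw [show LinearMap.toMatrix (bas d) (bas d) (Ulin D hmom4 γ b s) = Nmat D hmom4 γ b s from rfl]
  rw [Matrix.mul_nonsing_inv _ hunit, Matrix.one_mulVec]

lemma gpath_cont (γ : ℝ) (b : ℕ) (W' : Matrix (Fin d) (Fin d) ℝ) (s₀ : ℝ)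
    (hdet : (Nmat D hmom4 γ b s₀).det ≠ 0) (i j : Fin d) :
    ContinuousAt (fun s => gpath D hmom4 γ b W' s i j) s₀ := by
  have hrw : (fun s => gpath D hmom4 γ b W' s i j)
      = (fun M : Matrix (Fin d × Fin d) (Fin d × Fin d) ℝ =>
          ((bas d).equivFun.symm (M *ᵥ ((bas d).equivFun W'))) i j)
        ∘ (fun s => ((Nmat D hmom4 γ b s).det)⁻¹ • (Nmat D hmom4 γ b s).adjugate) := by
    funext s
    simp only [Function.comp_apply, gpath, Matrix.inv_def, Ring.inverse_eq_inv]
  rw [hrw]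
  apply ContinuousAt.comp
  · exact (cont_evalF _ i j).continuousAt
  · exact ContinuousAt.smul
      (((cont_Nmat D hmom4 γ b).matrix_det.continuousAt).inv₀ hdet)
      ((cont_Nmat D hmom4 γ b).matrix_adjugate.continuousAt)

end WithMeasure

end TbAux
namespace TbAux

variable {d : ℕ}

lemma abs_sum_sq_le (v : Fin d → ℝ) : (∑ i, |v i|)^2 ≤ (d:ℝ) * (v ⬝ᵥ v) := by
  have h := Finset.sum_mul_sq_le_sq_mul_sq Finset.univ (fun _ : Fin d => (1:ℝ)) (fun i => |v i|)
  simp only [one_mul, mul_one, one_pow, Finset.sum_const, Finset.card_univ, Fintype.card_fin,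
    nsmul_eq_mul] at h
  calc (∑ i, |v i|)^2 ≤ (d:ℝ) * ∑ i, |v i|^2 := h
    _ = (d:ℝ) * (v ⬝ᵥ v) := by
        congr 1
        rw [dot_self_sq]
        exact Finset.sum_congr rfl fun i _ => sq_abs _

lemma psd_perturb (hd : 1 ≤ d) {M M' : Matrix (Fin d) (Fin d) ℝ} {c : ℝ} (hc0 : 0 < c)
    (hlb : ∀ v : Fin d → ℝ, c * (v ⬝ᵥ v) ≤ v ⬝ᵥ M *ᵥ v)
    (hclose : ∀ i j, |M' i j - M i j| ≤ c / ((d:ℝ) * d))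
    (hherm : M'ᵀ = M') : M'.PosSemidef := by
  have hd1 : (1:ℝ) ≤ (d:ℝ) := by exact_mod_cast hd
  refine Matrix.PosSemidef.of_dotProduct_mulVec_nonneg ?_ ?_
  · rw [Matrix.IsHermitian, conjT, hherm]
  · intro v
    rw [star_vec]
    have hsplit : v ⬝ᵥ M' *ᵥ v = v ⬝ᵥ M *ᵥ v + v ⬝ᵥ (M' - M) *ᵥ v := by
      rw [Matrix.sub_mulVec, dotProduct_sub]
      ring
    have hquad : |v ⬝ᵥ (M' - M) *ᵥ v| ≤ (c / ((d:ℝ) * d)) * ((∑ i, |v i|)^2) := by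
      rw [quad_eq]
      calc |∑ i, ∑ j, (M' - M) i j * (v i * v j)|
          ≤ ∑ i, ∑ j, |(M' - M) i j * (v i * v j)| := by
            refine (Finset.abs_sum_le_sum_abs _ _).trans ?_
            exact Finset.sum_le_sum fun i _ => Finset.abs_sum_le_sum_abs _ _
        _ ≤ ∑ i, ∑ j, (c / ((d:ℝ) * d)) * (|v i| * |v j|) := by
            refine Finset.sum_le_sum fun i _ => Finset.sum_le_sum fun j _ => ?_
            rw [abs_mul, abs_mul]
            have h1 : |(M' - M) i j| ≤ c / ((d:ℝ) * d) := by
              have := hclose i j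
              simpa [Matrix.sub_apply] using this
            exact mul_le_mul_of_nonneg_right h1 (mul_nonneg (abs_nonneg _) (abs_nonneg _))
        _ = (c / ((d:ℝ) * d)) * ((∑ i, |v i|)^2) := by
            have he : (c / ((d:ℝ) * d)) * ((∑ i, |v i|)^2)
                = ∑ i, ∑ j, (c / ((d:ℝ) * d)) * (|v i| * |v j|) := by
              rw [sq, Finset.sum_mul_sum, Finset.mul_sum]
              refine Finset.sum_congr rfl fun i _ => ?_
              rw [Finset.mul_sum]
              try exact Finset.sum_congr rfl fun j _ => by ring
            exact he.symm
    have hsum := abs_sum_sq_le v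
    have hdot := dot_nonneg v
    have hlbv := hlb v
    have hdd : 0 < (d:ℝ) * d := by nlinarith
    rw [hsplit]
    have hb1 : (c / ((d:ℝ) * d)) * ((∑ i, |v i|)^2) ≤ (c / ((d:ℝ) * d)) * ((d:ℝ) * (v ⬝ᵥ v)) :=
      mul_le_mul_of_nonneg_left hsum (le_of_lt (div_pos hc0 hdd))
    have hb2 : (c / ((d:ℝ) * d)) * ((d:ℝ) * (v ⬝ᵥ v)) = (c / (d:ℝ)) * (v ⬝ᵥ v) := by
      field_simp
    have hb3 : (c / (d:ℝ)) * (v ⬝ᵥ v) ≤ c * (v ⬝ᵥ v) := by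
      apply mul_le_mul_of_nonneg_right _ hdot
      rw [div_le_iff₀ (by linarith : (0:ℝ) < d)]
      nlinarith
    have habs : |v ⬝ᵥ (M' - M) *ᵥ v| ≤ c * (v ⬝ᵥ v) := by linarith
    have hlow := (abs_le.mp habs).1
    linarith

end TbAux
namespace TbAux

variable {d : ℕ}

section WithMeasure

variable (D : Measure ((Fin d → ℝ) × ℝ)) [IsProbabilityMeasure D]
variable (hmom4 : Integrable (fun p : (Fin d → ℝ) × ℝ => (p.1 ⬝ᵥ p.1)^2) D)

include hmom4

lemma inv_psd (hd : 1 ≤ d) {Hnorm Rsq : ℝ}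
    (hHn : (Hnorm • (1 : Matrix (Fin d) (Fin d) ℝ) - Hmat D).PosSemidef)
    (hRn : (Rsq • Hmat D - MI D).PosSemidef)
    (hHpd : (Hmat D).PosDef) (hRsq0 : 0 ≤ Rsq)
    {γ : ℝ} {b : ℕ} (hγ0 : 0 ≤ γ) (hb : 1 ≤ b)
    (hq : γ * (Rsq + ((b:ℝ) - 1) * Hnorm) / b < 2)
    {W' A : Matrix (Fin d) (Fin d) ℝ} (hW' : W'.PosDef)
    (hTA : TopB D γ b A = W') : A.PosSemidef := by
  have hHsym : (Hmat D)ᵀ = Hmat D := Hmat_sym D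
  have hbij : ∀ s ∈ Set.Icc (0:ℝ) 1, Function.Bijective (Ulin D hmom4 γ b s) :=
    fun s hs => Ulin_bij D hmom4 hHn hRn hHpd hRsq0 hγ0 hb hq hs
  have hunit : ∀ s ∈ Set.Icc (0:ℝ) 1, IsUnit (Nmat D hmom4 γ b s).det :=
    fun s hs => Nmat_unit D hmom4 γ b s (hbij s hs)
  set g := gpath D hmom4 γ b W' with hgdef
  have hUg : ∀ s ∈ Set.Icc (0:ℝ) 1, Ulin D hmom4 γ b s (g s) = W' :=
    fun s hs => gpath_eq D hmom4 γ b W' s (hunit s hs)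
  have hcont : ∀ s₀ ∈ Set.Icc (0:ℝ) 1, ∀ i j, ContinuousAt (fun s => g s i j) s₀ :=
    fun s₀ hs i j => gpath_cont D hmom4 γ b W' s₀ (hunit s₀ hs).ne_zero i j
  have hW'sym : W'ᵀ = W' := by rw [← conjT, hW'.1]
  have hsym : ∀ s ∈ Set.Icc (0:ℝ) 1, (g s)ᵀ = g s := by
    intro s hs
    apply (hbij s hs).1
    rw [← Ulin_transpose, hUg s hs, hW'sym]
  have hstep : ∀ s ∈ Set.Icc (0:ℝ) 1, (g s).PosSemidef → (g s).PosDef := by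
    intro s hs hpsd
    refine Matrix.PosDef.of_dotProduct_mulVec_pos hpsd.1 fun v hv => ?_
    rw [star_vec]
    by_contra hle
    push_neg at hle
    have hz : v ⬝ᵥ (g s) *ᵥ v = 0 := le_antisymm hle (psd_quad_nonneg hpsd v)
    have hnull : (g s) *ᵥ v = 0 := by
      have h2 := hpsd.dotProduct_mulVec_zero_iff v
      rw [star_vec] at h2
      exact h2.mp hz
    have hTle : v ⬝ᵥ (TopB D γ b (g s)) *ᵥ v ≤ 0 :=
      quad_TopB_le D hmom4 hγ0 hb hHsym hpsd hnull
    have hquadW : v ⬝ᵥ W' *ᵥ v ≤ 0 := by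
      rw [← hUg s hs, Ulin_apply, Matrix.add_mulVec, dotProduct_add,
        smul_mulVec, smul_mulVec, dotProduct_smul, dotProduct_smul,
        smul_eq_mul, smul_eq_mul, hz, mul_zero, zero_add]
      nlinarith [hs.1, hTle, mul_nonneg hs.1 (neg_nonneg.mpr hTle)]
    have hpos := hW'.dotProduct_mulVec_pos hv
    rw [star_vec] at hpos
    linarith
  set K := {s : ℝ | s ∈ Set.Icc (0:ℝ) 1 ∧ ∀ t ∈ Set.Icc (0:ℝ) s, (g t).PosSemidef} with hKdef
  have hg0 : g 0 = W' := by
    have h := hUg 0 ⟨le_refl 0, zero_le_one⟩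
    rw [Ulin_apply] at h
    simpa using h
  have h0K : (0:ℝ) ∈ K := by
    refine ⟨⟨le_refl 0, zero_le_one⟩, fun t ht => ?_⟩
    have ht0 : t = 0 := le_antisymm ht.2 ht.1
    rw [ht0, hg0]
    exact hW'.posSemidef
  have hKne : K.Nonempty := ⟨0, h0K⟩
  have hKbdd : BddAbove K := ⟨1, fun s hs => hs.1.2⟩
  set sstar := sSup K with hsstar
  have hs0 : 0 ≤ sstar := le_csSup hKbdd h0K
  have hs1 : sstar ≤ 1 := csSup_le hKne fun s hs => hs.1.2
  have hsIcc : sstar ∈ Set.Icc (0:ℝ) 1 := ⟨hs0, hs1⟩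
  have hbelow : ∀ t, 0 ≤ t → t < sstar → (g t).PosSemidef := by
    intro t ht htlt
    obtain ⟨s', hs'K, hts'⟩ := exists_lt_of_lt_csSup hKne htlt
    exact hs'K.2 t ⟨ht, le_of_lt hts'⟩
  have hPSDstar : (g sstar).PosSemidef := by
    rcases eq_or_lt_of_le hs0 with h0 | h0
    · rw [← h0, hg0]
      exact hW'.posSemidef
    · refine Matrix.PosSemidef.of_dotProduct_mulVec_nonneg ?_ ?_
      · rw [Matrix.IsHermitian, conjT]
        exact hsym sstar hsIcc
      · intro v
        rw [star_vec, quad_eq]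
        have htend : Filter.Tendsto (fun t => ∑ i, ∑ j, g t i j * (v i * v j))
            (nhdsWithin sstar (Set.Iio sstar))
            (nhds (∑ i, ∑ j, g sstar i j * (v i * v j))) := by
          refine tendsto_finset_sum _ fun i _ => tendsto_finset_sum _ fun j _ => ?_
          exact (((hcont sstar hsIcc i j).tendsto).mono_left nhdsWithin_le_nhds).mul_const _
        apply ge_of_tendsto htend
        have hmem : Set.Ioo 0 sstar ∈ nhdsWithin sstar (Set.Iio sstar) :=
          Ioo_mem_nhdsLT_of_mem ⟨h0, le_refl _⟩
        filter_upwards [hmem] with t ht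
        have hpsdt := hbelow t (le_of_lt ht.1) ht.2
        have hq2 := psd_quad_nonneg hpsdt v
        rwa [quad_eq] at hq2
  have hPDstar := hstep sstar hsIcc hPSDstar
  have hsstar1 : sstar = 1 := by
    by_contra hne
    have hlt : sstar < 1 := lt_of_le_of_ne hs1 hne
    obtain ⟨c, hc0, hlb⟩ := pd_lower hd hPDstar
    have hdd : (0:ℝ) < (d:ℝ) * d := by
      have h1 : (1:ℝ) ≤ d := by exact_mod_cast hd
      nlinarith
    have hev : ∀ᶠ s in nhds sstar, ∀ ij : Fin d × Fin d,
        |g s ij.1 ij.2 - g sstar ij.1 ij.2| < c / ((d:ℝ) * d) := by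
      rw [Filter.eventually_all]
      intro ij
      have hca := hcont sstar hsIcc ij.1 ij.2
      have h2 := Metric.tendsto_nhds.mp hca.tendsto (c / ((d:ℝ) * d)) (div_pos hc0 hdd)
      filter_upwards [h2] with s hs2
      rwa [Real.dist_eq] at hs2
    obtain ⟨δ, hδ0, hδ⟩ := Metric.eventually_nhds_iff.mp hev
    set s₁ := min 1 (sstar + δ/2) with hs₁def
    have hs₁gt : sstar < s₁ := lt_min hlt (by linarith)
    have hs₁le1 : s₁ ≤ 1 := min_le_left _ _
    have hs₁0 : 0 ≤ s₁ := le_of_lt (lt_of_le_of_lt hs0 hs₁gt)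
    have hs₁K : s₁ ∈ K := by
      refine ⟨⟨hs₁0, hs₁le1⟩, fun t ht => ?_⟩
      rcases lt_or_ge t sstar with hcase | hcase
      · exact hbelow t ht.1 hcase
      · have hsr : s₁ ≤ sstar + δ/2 := min_le_right _ _
        have hdist : dist t sstar < δ := by
          rw [Real.dist_eq, abs_of_nonneg (by linarith : (0:ℝ) ≤ t - sstar)]
          have ht2 := ht.2
          linarith
        have hclose := hδ hdist
        exact psd_perturb hd hc0 hlb (fun i j => le_of_lt (hclose (i, j)))
          (hsym t ⟨ht.1, le_trans ht.2 hs₁le1⟩)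
    have hle := le_csSup hKbdd hs₁K
    linarith
  have hg1psd : (g 1).PosSemidef := by rw [← hsstar1]; exact hPSDstar
  have h1Icc : (1:ℝ) ∈ Set.Icc (0:ℝ) 1 := ⟨zero_le_one, le_refl 1⟩
  have hUA : Ulin D hmom4 γ b 1 A = W' := by
    rw [Ulin_apply]
    simpa using hTA
  have hAg : A = g 1 := by
    apply (hbij 1 h1Icc).1
    rw [hUA, hUg 1 h1Icc]
  rw [hAg]
  exact hg1psd

end WithMeasure

end TbAux
namespace TbAux

variable {d : ℕ}

lemma pd_diag {M : Matrix (Fin d) (Fin d) ℝ} (hM : M.PosDef) (i : Fin d) : 0 < M i i := by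
  have hv : (Pi.single i 1 : Fin d → ℝ) ≠ 0 := by
    intro h
    have := congrFun h i
    simp at this
  have h := hM.dotProduct_mulVec_pos hv
  rw [star_vec] at h
  rwa [quad_eq, Finset.sum_eq_single i, Finset.sum_eq_single i, Pi.single_eq_same, mul_one,
    mul_one] at h
  · intro j _ hj; simp [Pi.single_eq_of_ne hj]
  · intro h'; exact absurd (Finset.mem_univ i) h'
  · intro j _ hj
    apply Finset.sum_eq_zero; intro k _
    rcases eq_or_ne k i with rfl | hk
    · simp [Pi.single_eq_of_ne hj]
    · simp [Pi.single_eq_of_ne hk]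
  · intro h'; exact absurd (Finset.mem_univ i) h'

lemma trace_eq_sum_diag (M : Matrix (Fin d) (Fin d) ℝ) : M.trace = ∑ i, M i i := rfl

end TbAux

open TbAux in
/-- Lemma: `T_b` is invertible on symmetric matrices and `T_b⁻¹`
preserves positive semidefiniteness. -/
theorem Tb_operator_invertible_psd_map
    {d : ℕ} (hd : 1 ≤ d)
    (D : Measure ((Fin d → ℝ) × ℝ)) [IsProbabilityMeasure D]
    (hmom4 : Integrable (fun p => (p.1 ⬝ᵥ p.1)^2) D)
    (hHpd : (Hmat D).PosDef)
    (Hnorm : ℝ) (hHnorm : IsLeast {t | specNormBound (Hmat D) t} Hnorm)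
    (Rsq : ℝ) (hRsq : IsLeast {r | (r • Hmat D - MI D).PosSemidef} Rsq)
    (b : ℕ) (hb : 1 ≤ b)
    (γ : ℝ) (hγ0 : 0 ≤ γ) (hγ : γ < 2 * (b : ℝ) / (Rsq + ((b : ℝ) - 1) * Hnorm)) :
    (∀ W : Matrix (Fin d) (Fin d) ℝ, W.IsSymm →
      ∃! A : Matrix (Fin d) (Fin d) ℝ, A.IsSymm ∧ TopB D γ b A = W) ∧
    (∀ W : Matrix (Fin d) (Fin d) ℝ, W.PosSemidef →
      ∀ A : Matrix (Fin d) (Fin d) ℝ, A.IsSymm → TopB D γ b A = W → A.PosSemidef) := by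

  classical
  have hHn1 : (Hnorm • (1 : Matrix (Fin d) (Fin d) ℝ) - Hmat D).PosSemidef := hHnorm.1.1
  have hRn : (Rsq • Hmat D - MI D).PosSemidef := hRsq.1
  have i0 : Fin d := ⟨0, hd⟩
  have hH00 : 0 < Hmat D i0 i0 := pd_diag hHpd i0
  have hHnorm0 : 0 < Hnorm := by
    have h := psd_diag hHn1 i0
    have h2 : (Hnorm • (1 : Matrix (Fin d) (Fin d) ℝ) - Hmat D) i0 i0
        = Hnorm - Hmat D i0 i0 := by
      simp [Matrix.sub_apply, Matrix.smul_apply, Matrix.one_apply_eq]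
    rw [h2] at h
    linarith
  have hbR : (0:ℝ) < b := by exact_mod_cast hb
  have hb1R : (1:ℝ) ≤ b := by exact_mod_cast hb
  -- R² ≥ 0
  have htrH : 0 < (Hmat D).trace := by
    rw [trace_eq_sum_diag]
    exact Finset.sum_pos (fun i _ => pd_diag hHpd i) ⟨i0, Finset.mem_univ i0⟩
  have htrMI : 0 ≤ (MI D).trace := by
    rw [trace_eq_sum_diag]
    apply Finset.sum_nonneg
    intro i _
    rw [MI_entry]
    apply integral_nonneg
    intro p
    exact mul_nonneg (dot_nonneg p.1) (mul_self_nonneg _)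
  have hRsq0 : 0 ≤ Rsq := by
    have h0 := psd_trace_nonneg hRn
    rw [trace_sub, trace_smul, smul_eq_mul] at h0
    by_contra hneg
    push_neg at hneg
    nlinarith
  -- step-size inequality
  set δ := Rsq + ((b:ℝ) - 1) * Hnorm with hδdef
  have hδpos : 0 < δ := by
    rcases le_or_gt δ 0 with hle | hpos
    · exfalso
      have h2 : 2 * (b:ℝ) / δ ≤ 0 :=
        div_nonpos_of_nonneg_of_nonpos (by positivity) hle
      linarith
    · exact hpos
  have hq : γ * δ / b < 2 := by
    have h1 : γ * δ < 2 * b := by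
      rw [lt_div_iff₀ hδpos] at hγ
      linarith
    rw [div_lt_iff₀ hbR]
    linarith
  -- bijectivity of T
  have hIcc1 : (1:ℝ) ∈ Set.Icc (0:ℝ) 1 := ⟨zero_le_one, le_refl _⟩
  have hbijU := Ulin_bij D hmom4 hHn1 hRn hHpd hRsq0 hγ0 hb hq hIcc1
  have hcoe : ⇑(Ulin D hmom4 γ b 1) = TopB D γ b := funext fun A => by
    rw [Ulin_apply]; simp
  have hbijT : Function.Bijective (TopB D γ b) := hcoe ▸ hbijU
  constructor
  · -- existence and uniqueness
    intro W hW
    obtain ⟨A, hA⟩ := hbijT.2 W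
    have hAsym : A.IsSymm := by
      apply hbijT.1
      rw [← TopB_transpose, hA]
      exact hW
    exact ⟨A, ⟨hAsym, hA⟩, fun A' hA' => hbijT.1 (by rw [hA'.2, hA])⟩
  · -- PSD preservation
    intro W hW A hAsym hTA
    obtain ⟨B₁, hB₁⟩ := hbijT.2 (1 : Matrix (Fin d) (Fin d) ℝ)
    have hWt : Wᵀ = W := by rw [← conjT, hW.1]
    have key : ∀ ε : ℝ, 0 < ε → (A + ε • B₁).PosSemidef := by
      intro ε hε
      have hWpd : (W + ε • (1 : Matrix (Fin d) (Fin d) ℝ)).PosDef := by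
        refine Matrix.PosDef.of_dotProduct_mulVec_pos ?_ fun v hv => ?_
        · rw [Matrix.IsHermitian, conjT, transpose_add, transpose_smul, transpose_one, hWt]
        · rw [TbAux.star_vec, Matrix.add_mulVec, dotProduct_add, smul_mulVec,
            dotProduct_smul, smul_eq_mul, Matrix.one_mulVec]
          have h1 := psd_quad_nonneg hW v
          have h2 := dot_pos hv
          nlinarith
      apply inv_psd D hmom4 hd hHn1 hRn hHpd hRsq0 hγ0 hb hq hWpd
      rw [TopB_add D hmom4, TopB_smul D hmom4, hTA, hB₁]
    have hAherm : A.IsHermitian := by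
      rw [Matrix.IsHermitian, conjT]
      exact hAsym
    refine Matrix.PosSemidef.of_dotProduct_mulVec_nonneg hAherm fun v => ?_
    rw [TbAux.star_vec]
    set a := v ⬝ᵥ A *ᵥ v with hadef
    set bb := v ⬝ᵥ B₁ *ᵥ v with hbbdef
    have hav : ∀ ε : ℝ, 0 < ε → 0 ≤ a + ε * bb := by
      intro ε hε
      have h1 := psd_quad_nonneg (key ε hε) v
      rwa [Matrix.add_mulVec, dotProduct_add, smul_mulVec, dotProduct_smul,
        smul_eq_mul] at h1
    by_contra hna
    push_neg at hna
    rcases le_or_gt bb 0 with hbb | hbb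
    · have h1 := hav 1 one_pos
      nlinarith
    · have hεpos : 0 < -a / (2 * bb) := div_pos (by linarith) (by linarith)
      have h2 := hav (-a / (2 * bb)) hεpos
      have h3 : a + (-a / (2 * bb)) * bb = a / 2 := by
        field_simp
        ring
      rw [h3] at h2
      linarith
end
end

section
/- Consider the mini-batch SGD centered iterates η_t with any batch size b ≥ 1 and step size γ satisfying 0 < γ ≤ 1/‖H‖₂ (so 0 ⪯ I − γH ≺ I), and suppose E[‖η_t‖²] < ∞ for all t. Then for any burn-in s ≥ 0 and window N ≥ 1, the tail-averaged centered iterate η̄_{s+1,N} = (1/N)·Σ_{t=s+1}^{s+N} η_t satisfies tr(H·E[η̄_{s+1,N} ⊗ η̄_{s+1,N}]) ≤ (2/(γ·N²))·Σ_{l=s+1}^{s+N} tr(E[η_l ⊗ η_l]). -/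
open MeasureTheory ProbabilityTheory Matrix Finset Filter
open scoped BigOperators

noncomputable section

namespace SGDAux

variable {d : ℕ}

lemma measurable_pi_lambda' {Ω' : Type*} (mΩ : MeasurableSpace Ω') {δ : Type*} [Fintype δ]
    {π : δ → Type*} [∀ a, MeasurableSpace (π a)] (f : Ω' → ∀ a, π a)
    (hf : ∀ a, @Measurable _ _ mΩ _ fun c => f c a) : @Measurable _ _ mΩ _ f := by
  letI := mΩ
  exact measurable_pi_lambda f hf

lemma psd_smul {M : Matrix (Fin d) (Fin d) ℝ} (h : M.PosSemidef) {c : ℝ} (hc : 0 ≤ c) :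
    (c • M).PosSemidef := by
  refine Matrix.PosSemidef.of_dotProduct_mulVec_nonneg ?_ fun x => ?_
  · unfold Matrix.IsHermitian
    rw [conjTranspose_smul, h.1.eq]
    simp
  · rw [smul_mulVec, dotProduct_smul]
    exact mul_nonneg hc (by simpa using h.dotProduct_mulVec_nonneg x)

lemma dot_symm {M : Matrix (Fin d) (Fin d) ℝ} (hM : Mᵀ = M) (x y : Fin d → ℝ) :
    x ⬝ᵥ M *ᵥ y = y ⬝ᵥ M *ᵥ x := by
  rw [Matrix.dotProduct_mulVec, ← Matrix.mulVec_transpose, hM, dotProduct_comm]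

lemma trace_mul_vecMulVec (A : Matrix (Fin d) (Fin d) ℝ) (u v : Fin d → ℝ) :
    (A * vecMulVec u v).trace = v ⬝ᵥ A *ᵥ u := by
  simp only [Matrix.trace, Matrix.diag, Matrix.mul_apply, vecMulVec_apply, dotProduct,
    Matrix.mulVec, Finset.mul_sum]
  apply Finset.sum_congr rfl; intro i _
  apply Finset.sum_congr rfl; intro j _
  ring

lemma dot_sum {ι : Type*} (s : Finset ι) (u : Fin d → ℝ) (v : ι → Fin d → ℝ) :
    u ⬝ᵥ (∑ i ∈ s, v i) = ∑ i ∈ s, u ⬝ᵥ v i := by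
  classical
  induction s using Finset.induction with
  | empty => simp
  | insert _ _ h ih => rw [Finset.sum_insert h, Finset.sum_insert h, dotProduct_add, ih]

lemma sum_dot {ι : Type*} (s : Finset ι) (u : ι → Fin d → ℝ) (v : Fin d → ℝ) :
    (∑ i ∈ s, u i) ⬝ᵥ v = ∑ i ∈ s, u i ⬝ᵥ v := by
  classical
  induction s using Finset.induction with
  | empty => simp
  | insert _ _ h ih => rw [Finset.sum_insert h, Finset.sum_insert h, add_dotProduct, ih]

lemma qf_sum {ι : Type*} (s : Finset ι) (f : ι → Matrix (Fin d) (Fin d) ℝ) (x y : Fin d → ℝ) :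
    x ⬝ᵥ (∑ k ∈ s, f k) *ᵥ y = ∑ k ∈ s, x ⬝ᵥ (f k) *ᵥ y := by
  classical
  induction s using Finset.induction with
  | empty => simp
  | insert _ _ h ih => rw [Finset.sum_insert h, Finset.sum_insert h, add_mulVec, dotProduct_add, ih]

lemma geom_psd {H : Matrix (Fin d) (Fin d) ℝ} (hH : H.PosSemidef) {γ : ℝ} (hγ : 0 < γ)
    (hB : ((1 : Matrix (Fin d) (Fin d) ℝ) - γ • H).PosSemidef) (K : ℕ) :
    ((2/γ) • (1 : Matrix (Fin d) (Fin d) ℝ) -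
      (H + (2:ℝ) • ∑ k ∈ Finset.range K, H * ((1 : Matrix (Fin d) (Fin d) ℝ) - γ • H)^(k+1))).PosSemidef := by
  set B : Matrix (Fin d) (Fin d) ℝ := 1 - γ • H with hBdef
  have hS : H + (2:ℝ) • ∑ k ∈ Finset.range K, H * B^(k+1)
      = (2:ℝ) • (H * ∑ k ∈ Finset.range (K+1), B^k) - H := by
    rw [Finset.mul_sum, Finset.sum_range_succ']
    simp only [pow_zero, mul_one, smul_add]
    rw [two_smul]
    module
  have hgeom : γ • (H * ∑ k ∈ Finset.range (K+1), B^k) = 1 - B^(K+1) := by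
    have h1 : (γ • H : Matrix (Fin d) (Fin d) ℝ) = 1 - B := by rw [hBdef]; abel
    rw [← smul_mul_assoc, h1]
    have := geom_sum_mul B (K+1)
    calc (1 - B) * ∑ k ∈ Finset.range (K+1), B^k
        = -((∑ k ∈ Finset.range (K+1), B^k) * (B - 1)) := by
          rw [Finset.sum_mul]
          rw [Finset.mul_sum]
          simp only [mul_sub, sub_mul, mul_one, one_mul, mul_pow]
          rw [← Finset.sum_neg_distrib]
          apply Finset.sum_congr rfl; intro k _
          rw [← pow_succ, ← pow_succ']
          abel
      _ = 1 - B^(K+1) := by rw [this]; abel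
  have hT : H * ∑ k ∈ Finset.range (K+1), B^k = γ⁻¹ • (1 - B^(K+1)) := by
    rw [← hgeom, smul_smul, inv_mul_cancel₀ (ne_of_gt hγ), one_smul]
  have key : (2/γ) • (1 : Matrix (Fin d) (Fin d) ℝ)
      - (H + (2:ℝ) • ∑ k ∈ Finset.range K, H * B^(k+1))
      = (2/γ) • B^(K+1) + H := by
    rw [hS, hT, smul_smul]
    rw [show (2:ℝ) * γ⁻¹ = 2/γ by rw [div_eq_mul_inv]]
    rw [smul_sub]
    abel
  rw [key]
  exact (psd_smul (hB.pow (K+1)) (by positivity)).add hH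

lemma sum_sq_decomp {I : Finset ℕ} {Q : ℕ → ℕ → ℝ} (hsymm : ∀ t l, Q t l = Q l t) :
    ∑ t ∈ I, ∑ l ∈ I, Q t l
      = ∑ t ∈ I, (Q t t + 2 * ∑ l ∈ I, (if t < l then Q t l else 0)) := by
  have tri : ∀ t l : ℕ, Q t l = (if t < l then Q t l else 0) + (if l < t then Q t l else 0)
      + (if t = l then Q t l else 0) := by
    intro t l; rcases lt_trichotomy t l with h|h|h
    · simp [h, not_lt.mpr h.le, ne_of_lt h]
    · simp [h, lt_irrefl]
    · simp [h, not_lt.mpr h.le, (ne_of_gt h)]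
  have expand : ∑ t ∈ I, ∑ l ∈ I, Q t l
      = (∑ t ∈ I, ∑ l ∈ I, (if t < l then Q t l else 0))
        + (∑ t ∈ I, ∑ l ∈ I, (if l < t then Q t l else 0))
        + (∑ t ∈ I, ∑ l ∈ I, (if t = l then Q t l else 0)) := by
    rw [← Finset.sum_add_distrib, ← Finset.sum_add_distrib]
    apply Finset.sum_congr rfl; intro t _
    rw [← Finset.sum_add_distrib, ← Finset.sum_add_distrib]
    exact Finset.sum_congr rfl fun l _ => tri t l
  have hswap : (∑ t ∈ I, ∑ l ∈ I, (if l < t then Q t l else 0))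
      = ∑ t ∈ I, ∑ l ∈ I, (if t < l then Q t l else 0) := by
    rw [Finset.sum_comm]
    apply Finset.sum_congr rfl; intro t _
    apply Finset.sum_congr rfl; intro l _
    by_cases h : t < l <;> simp [h, hsymm t l]
  have hdiag : (∑ t ∈ I, ∑ l ∈ I, (if t = l then Q t l else 0)) = ∑ t ∈ I, Q t t := by
    apply Finset.sum_congr rfl; intro t ht
    rw [Finset.sum_ite_eq I t (fun l => Q t l), if_pos ht]
  rw [expand, hswap, hdiag]
  rw [← Finset.sum_add_distrib, ← Finset.sum_add_distrib]
  apply Finset.sum_congr rfl; intro t _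
  ring

variable (D : Measure ((Fin d → ℝ) × ℝ)) [IsProbabilityMeasure D]

lemma meas_xj (j : Fin d) : Measurable fun p : (Fin d → ℝ) × ℝ => p.1 j :=
  (measurable_pi_apply j).comp measurable_fst

lemma meas_dotc (v : Fin d → ℝ) : Measurable fun p : (Fin d → ℝ) × ℝ => v ⬝ᵥ p.1 := by
  unfold dotProduct
  exact Finset.measurable_sum _ fun j _ => (measurable_const.mul (meas_xj j))

lemma meas_xx : Measurable fun p : (Fin d → ℝ) × ℝ => p.1 ⬝ᵥ p.1 := by
  unfold dotProduct
  exact Finset.measurable_sum _ fun j _ => ((meas_xj j).mul (meas_xj j))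

lemma meas_eps (wstar : Fin d → ℝ) :
    Measurable fun p : (Fin d → ℝ) × ℝ => p.2 - wstar ⬝ᵥ p.1 :=
  measurable_snd.sub (meas_dotc wstar)

lemma xx_nonneg (x : Fin d → ℝ) : 0 ≤ x ⬝ᵥ x :=
  Finset.sum_nonneg fun i _ => mul_self_nonneg _

lemma sq_le_xx (x : Fin d → ℝ) (j : Fin d) : x j ^ 2 ≤ x ⬝ᵥ x := by
  have : x j ^ 2 = x j * x j := sq (x j) ▸ by ring
  rw [this]
  exact Finset.single_le_sum (fun i _ => mul_self_nonneg (x i)) (Finset.mem_univ j)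

lemma abs_mul_le_xx (x : Fin d → ℝ) (j k : Fin d) : |x j * x k| ≤ x ⬝ᵥ x := by
  have hj := sq_le_xx x j
  have hk := sq_le_xx x k
  rw [abs_mul]
  nlinarith [abs_nonneg (x j), abs_nonneg (x k), sq_abs (x j), sq_abs (x k)]

lemma int_xx (hmom4 : Integrable (fun p => (p.1 ⬝ᵥ p.1)^2) D) :
    Integrable (fun p => p.1 ⬝ᵥ p.1) D := by
  refine Integrable.mono' (hmom4.add (integrable_const 1)) (meas_xx).aestronglyMeasurable ?_
  filter_upwards with p
  have h := xx_nonneg p.1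
  simp only [Pi.add_apply]
  rw [Real.norm_eq_abs, abs_of_nonneg h]
  nlinarith [sq_nonneg (p.1 ⬝ᵥ p.1 - 1)]

lemma int_xjxk (hmom4 : Integrable (fun p => (p.1 ⬝ᵥ p.1)^2) D) (j k : Fin d) :
    Integrable (fun p => p.1 j * p.1 k) D := by
  refine Integrable.mono' (int_xx D hmom4) ((meas_xj j).mul (meas_xj k)).aestronglyMeasurable ?_
  filter_upwards with p
  rw [Real.norm_eq_abs]
  exact abs_mul_le_xx p.1 j k

lemma int_eps_sq (hmom4 : Integrable (fun p => (p.1 ⬝ᵥ p.1)^2) D)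
    (hy2 : Integrable (fun p => p.2 ^ 2) D) (wstar : Fin d → ℝ) :
    Integrable (fun p => (p.2 - wstar ⬝ᵥ p.1)^2) D := by
  refine Integrable.mono' (((hy2.const_mul 2)).add ((int_xx D hmom4).const_mul
    (2 * (wstar ⬝ᵥ wstar)))) (((meas_eps wstar).pow_const 2).aestronglyMeasurable) ?_
  filter_upwards with p
  simp only [Pi.add_apply]
  rw [Real.norm_eq_abs, abs_of_nonneg (sq_nonneg _)]
  have hcs : (wstar ⬝ᵥ p.1)^2 ≤ (wstar ⬝ᵥ wstar) * (p.1 ⬝ᵥ p.1) := by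
    have := Finset.sum_mul_sq_le_sq_mul_sq Finset.univ wstar p.1
    simpa [dotProduct, sq] using this
  nlinarith [sq_nonneg (p.2 + wstar ⬝ᵥ p.1), sq_nonneg (p.2 - wstar ⬝ᵥ p.1)]

lemma int_eps_xk (hmom4 : Integrable (fun p => (p.1 ⬝ᵥ p.1)^2) D)
    (hy2 : Integrable (fun p => p.2 ^ 2) D) (wstar : Fin d → ℝ) (k : Fin d) :
    Integrable (fun p => (p.2 - wstar ⬝ᵥ p.1) * p.1 k) D := by
  refine Integrable.mono' ((int_eps_sq D hmom4 hy2 wstar).add (int_xx D hmom4))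
    ((meas_eps wstar).mul (meas_xj k)).aestronglyMeasurable ?_
  filter_upwards with p
  simp only [Pi.add_apply]
  rw [Real.norm_eq_abs, abs_mul]
  have h1 := sq_le_xx p.1 k
  nlinarith [abs_nonneg (p.2 - wstar ⬝ᵥ p.1), abs_nonneg (p.1 k),
    sq_abs (p.2 - wstar ⬝ᵥ p.1), sq_abs (p.1 k), sq_nonneg (|p.2 - wstar ⬝ᵥ p.1| - |p.1 k|)]

end SGDAux

namespace SGDAux
variable {d : ℕ} (D : Measure ((Fin d → ℝ) × ℝ)) [IsProbabilityMeasure D]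

lemma eps_orth (hmom4 : Integrable (fun p => (p.1 ⬝ᵥ p.1)^2) D)
    (hy2 : Integrable (fun p => p.2 ^ 2) D) (wstar : Fin d → ℝ)
    (hmin : ∀ w, Lloss D wstar ≤ Lloss D w) (k : Fin d) :
    ∫ p, (p.2 - wstar ⬝ᵥ p.1) * p.1 k ∂D = 0 := by
  set c : ℝ := ∫ p, (p.2 - wstar ⬝ᵥ p.1) * p.1 k ∂D with hc
  set m : ℝ := ∫ p, (p.1 k)^2 ∂D with hm
  have hmnn : 0 ≤ m := integral_nonneg fun p => sq_nonneg _
  have hintxk2 : Integrable (fun p => (p.1 k)^2) D := by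
    have := int_xjxk D hmom4 k k
    simpa [sq] using this
  have key : ∀ s : ℝ, 0 ≤ -(s * c) + s^2/2 * m := by
    intro s
    have hw := hmin (wstar + (Pi.single k s : Fin d → ℝ))
    unfold Lloss at hw
    have hexp : ∀ p : (Fin d → ℝ) × ℝ,
        (p.2 - (wstar + (Pi.single k s : Fin d → ℝ)) ⬝ᵥ p.1)^2
          = (p.2 - wstar ⬝ᵥ p.1)^2 - 2*s*((p.2 - wstar ⬝ᵥ p.1) * p.1 k) + s^2 * (p.1 k)^2 := by
      intro p
      rw [add_dotProduct, single_dotProduct]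
      ring
    rw [show (fun p : (Fin d → ℝ) × ℝ => (p.2 - (wstar + (Pi.single k s : Fin d → ℝ)) ⬝ᵥ p.1)^2)
        = fun p => (p.2 - wstar ⬝ᵥ p.1)^2 - 2*s*((p.2 - wstar ⬝ᵥ p.1) * p.1 k)
          + s^2 * (p.1 k)^2 from funext hexp] at hw
    have hfa : Integrable (fun p : (Fin d → ℝ) × ℝ =>
        (p.2 - wstar ⬝ᵥ p.1)^2 - 2*s*((p.2 - wstar ⬝ᵥ p.1) * p.1 k)) D :=
      (int_eps_sq D hmom4 hy2 wstar).sub ((int_eps_xk D hmom4 hy2 wstar k).const_mul (2*s))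
    have hfb : Integrable (fun p : (Fin d → ℝ) × ℝ => s^2 * p.1 k ^ 2) D :=
      hintxk2.const_mul (s^2)
    rw [integral_add hfa hfb,
      integral_sub (int_eps_sq D hmom4 hy2 wstar)
        ((int_eps_xk D hmom4 hy2 wstar k).const_mul (2*s)),
      integral_const_mul, integral_const_mul] at hw
    rw [← hc, ← hm] at hw
    nlinarith [hw]
  show c = 0
  have hm1 : (0:ℝ) < m + 1 := by linarith
  set t : ℝ := c/(m+1) with htdef
  have ht : c = t*(m+1) := (div_mul_cancel₀ c (ne_of_gt hm1)).symm
  have h1 := key t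
  rw [ht] at h1
  have ht2 : t^2 ≤ 0 := by nlinarith [h1, hmnn, sq_nonneg t, mul_nonneg (sq_nonneg t) hmnn]
  have h0 : t^2 = 0 := le_antisymm ht2 (sq_nonneg t)
  have ht0 : t = 0 := pow_eq_zero_iff (two_ne_zero) |>.mp h0
  rw [ht, ht0, zero_mul]

end SGDAux

set_option maxHeartbeats 2000000 in
open SGDAux in
/-- Lemma: the tail-averaged covariance trace bound. -/
theorem tail_averaged_covariance_trace_bound
    {d : ℕ} (hd : 1 ≤ d)
    (D : Measure ((Fin d → ℝ) × ℝ)) [IsProbabilityMeasure D]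
    (hmom4 : Integrable (fun p => (p.1 ⬝ᵥ p.1)^2) D)
    (hy2 : Integrable (fun p => p.2 ^ 2) D)
    (wstar : Fin d → ℝ) (hmin : ∀ w, Lloss D wstar ≤ Lloss D w)
    (hnoise : Integrable (fun p => (p.2 - wstar ⬝ᵥ p.1)^2 * (p.1 ⬝ᵥ p.1)) D)
    (hHpd : (Hmat D).PosDef)
    (μ : ℝ) (hμ : IsGreatest {t | (Hmat D - t • 1).PosSemidef} μ) (hμpos : 0 < μ)
    (Hnorm : ℝ) (hHnorm : IsLeast {t | specNormBound (Hmat D) t} Hnorm)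
    -- the SGD process: batch size `b ≥ 1`, step size `0 < γ ≤ 1/‖H‖₂`
    (b : ℕ) (hb : 1 ≤ b)
    {Ω : Type*} [MeasurableSpace Ω] (P : Measure Ω) [IsProbabilityMeasure P]
    (X : ℕ → Fin b → Ω → (Fin d → ℝ)) (Y : ℕ → Fin b → Ω → ℝ)
    (hmeas : ∀ t i, Measurable fun ω => (X t i ω, Y t i ω))
    (hiid : iIndepFun
      (fun (q : ℕ × Fin b) ω => (X q.1 q.2 ω, Y q.1 q.2 ω)) P)
    (hlaw : ∀ t i, Measure.map (fun ω => (X t i ω, Y t i ω)) P = D)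
    (γ : ℝ) (hγpos : 0 < γ) (hγ : γ ≤ 1 / Hnorm)
    -- the mini-batch SGD iterates and their centered versions `η_t = w_t - w*`
    (w0 : Fin d → ℝ) (w : ℕ → Ω → (Fin d → ℝ))
    (hw0 : w 0 = fun _ => w0)
    (hwrec : ∀ t ω, w (t+1) ω =
      w t ω - (γ / (b : ℝ)) •
        ∑ i : Fin b, ((w t ω ⬝ᵥ X (t+1) i ω) - Y (t+1) i ω) • X (t+1) i ω)
    -- `E‖η_t‖² < ∞` for every `t`
    (hint : ∀ t, Integrable (fun ω => (w t ω - wstar) ⬝ᵥ (w t ω - wstar)) P)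
    -- burn-in `s` and window `N`
    (s N : ℕ) (hN : 1 ≤ N) :
    (Hmat D *
        matExp P (fun ω =>
          vecMulVec ((N : ℝ)⁻¹ • ∑ t ∈ Finset.Ioc s (s + N), (w t ω - wstar))
            ((N : ℝ)⁻¹ • ∑ t ∈ Finset.Ioc s (s + N), (w t ω - wstar)))).trace ≤
      (2 / (γ * (N : ℝ)^2)) *
        ∑ l ∈ Finset.Ioc s (s + N),
          (matExp P (fun ω => vecMulVec (w l ω - wstar) (w l ω - wstar))).trace := by
  classical
  set H : Matrix (Fin d) (Fin d) ℝ := Hmat D with hHdef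
  set B : Matrix (Fin d) (Fin d) ℝ := 1 - γ • H with hBdef
  set η : ℕ → Ω → (Fin d → ℝ) := fun t ω => w t ω - wstar with hηdef
  set Iset : Finset ℕ := Finset.Ioc s (s+N) with hIdef
  -- Basic matrix facts
  have Hentry : ∀ j k, H j k = ∫ p, p.1 j * p.1 k ∂D := by
    intro j k; simp [hHdef, Hmat, matExp, vecMulVec]
  have Hsymm : Hᵀ = H := by
    ext j k
    rw [Matrix.transpose_apply, Hentry, Hentry]
    congr 1; funext p; ring
  have HPSD : H.PosSemidef := hHpd.posSemidef
  have Hnormpos : 0 < Hnorm := by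
    have e0 : Fin d → ℝ := Pi.single ⟨0, hd⟩ 1
    have he0 : (Pi.single (⟨0, hd⟩ : Fin d) (1:ℝ) : Fin d → ℝ) ≠ 0 := by
      intro hcon
      have := congrFun hcon ⟨0, hd⟩
      simp at this
    have q1 : 0 < (Pi.single (⟨0, hd⟩ : Fin d) (1:ℝ) : Fin d → ℝ) ⬝ᵥ
        H *ᵥ (Pi.single (⟨0, hd⟩ : Fin d) (1:ℝ) : Fin d → ℝ) := by
      have := hHpd.dotProduct_mulVec_pos he0
      simpa using this
    have q2 := hHnorm.1.1.dotProduct_mulVec_nonneg (Pi.single (⟨0, hd⟩ : Fin d) (1:ℝ) : Fin d → ℝ)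
    rw [sub_mulVec, dotProduct_sub, smul_mulVec, one_mulVec, dotProduct_smul] at q2
    simp only [star_trivial, smul_eq_mul] at q2
    have q3 : (Pi.single (⟨0, hd⟩ : Fin d) (1:ℝ) : Fin d → ℝ) ⬝ᵥ
        (Pi.single (⟨0, hd⟩ : Fin d) (1:ℝ) : Fin d → ℝ) = 1 := by
      rw [single_dotProduct]
      simp
    rw [q3, mul_one] at q2
    linarith [sub_nonneg.mp q2]
  have hγH : γ * Hnorm ≤ 1 := (le_div_iff₀ Hnormpos).mp hγ
  have BPSD : B.PosSemidef := by
    have hBrw : B = (1 - γ*Hnorm) • (1 : Matrix (Fin d) (Fin d) ℝ)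
        + γ • (Hnorm • (1 : Matrix (Fin d) (Fin d) ℝ) - H) := by
      rw [hBdef]; module
    rw [hBrw]
    exact (psd_smul Matrix.PosSemidef.one (by linarith)).add (psd_smul hHnorm.1.1 hγpos.le)
  -- measurability structure
  set data : ℕ × Fin b → Ω → (Fin d → ℝ) × ℝ := fun q ω => (X q.1 q.2 ω, Y q.1 q.2 ω)
    with hdatadef
  set F : ℕ → MeasurableSpace Ω := fun m =>
    ⨆ q ∈ {q : ℕ × Fin b | q.1 ≤ m}, MeasurableSpace.comap (data q) inferInstance with hFdef
  have hFmono : ∀ {a c : ℕ}, a ≤ c → F a ≤ F c := by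
    intro a c hac
    exact biSup_mono fun q hq => le_trans hq hac
  have hFle : ∀ m, F m ≤ (inferInstance : MeasurableSpace Ω) := by
    intro m
    refine iSup₂_le fun q hq => ?_
    exact (hmeas q.1 q.2).comap_le
  have hcomap_le : ∀ (q : ℕ × Fin b) (m : ℕ), q.1 ≤ m →
      MeasurableSpace.comap (data q) inferInstance ≤ F m := by
    intro q m hq
    simp only [hFdef]
    exact le_biSup (fun q : ℕ × Fin b => MeasurableSpace.comap (data q) inferInstance)
      (show q ∈ {q : ℕ × Fin b | q.1 ≤ m} from hq)
  have hdataF : ∀ (q : ℕ × Fin b) (m : ℕ), q.1 ≤ m → Measurable[F m] (data q) := by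
    intro q m hq
    exact (measurable_iff_comap_le.mpr le_rfl).mono (hcomap_le q m hq) le_rfl
  have hXF : ∀ (m t : ℕ) (i : Fin b) (j : Fin d), t ≤ m →
      Measurable[F m] fun ω => X t i ω j := by
    intro m t i j ht
    exact (measurable_pi_apply j).comp (measurable_fst.comp (hdataF (t, i) m ht))
  have hYF : ∀ (m t : ℕ) (i : Fin b), t ≤ m → Measurable[F m] fun ω => Y t i ω := by
    intro m t i ht
    exact measurable_snd.comp (hdataF (t, i) m ht)
  have measwF : ∀ m, Measurable[F m] (w m) := by
    intro m
    induction m with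
    | zero => rw [hw0]; exact measurable_const
    | succ m ih =>
      have hwm : Measurable[F (m+1)] (w m) := ih.mono (hFmono (Nat.le_succ m)) le_rfl
      have hwmj : ∀ j, Measurable[F (m+1)] fun ω => w m ω j :=
        fun j => (measurable_pi_apply j).comp hwm
      have hdot : ∀ i, Measurable[F (m+1)] fun ω => w m ω ⬝ᵥ X (m+1) i ω := by
        intro i
        unfold dotProduct
        exact Finset.measurable_sum _ fun j _ => (hwmj j).mul (hXF (m+1) (m+1) i j le_rfl)
      rw [show w (m+1) = fun ω => w m ω - (γ / (b : ℝ)) •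
          ∑ i : Fin b, ((w m ω ⬝ᵥ X (m+1) i ω) - Y (m+1) i ω) • X (m+1) i ω
        from funext (hwrec m)]
      refine measurable_pi_lambda' (F (m+1)) _ fun j => ?_
      simp only [Pi.sub_apply, Pi.smul_apply, smul_eq_mul, Finset.sum_apply]
      exact (hwmj j).sub (measurable_const.mul (Finset.measurable_sum _ fun i _ =>
        ((hdot i).sub (hYF (m+1) (m+1) i le_rfl)).mul (hXF (m+1) (m+1) i j le_rfl)))
  have measw : ∀ t, Measurable (w t) := fun t => (measwF t).mono (hFle t) le_rfl
  have measηF : ∀ (t m : ℕ), t ≤ m → Measurable[F m] (η t) := by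
    intro t m htm
    have h := (measwF t).mono (hFmono htm) le_rfl
    refine measurable_pi_lambda' (F m) _ fun j => ?_
    simp only [hηdef, Pi.sub_apply]
    exact ((measurable_pi_apply j).comp h).sub measurable_const
  have measηj : ∀ (t : ℕ) (j : Fin d), Measurable fun ω => η t ω j := by
    intro t j
    have : Measurable[F t] (η t) := measηF t t le_rfl
    exact ((measurable_pi_apply j).comp this).mono (hFle t) le_rfl
  -- independence
  have hindepS : ∀ (m : ℕ) (i : Fin b),
      Indep (F m) (MeasurableSpace.comap (data (m+1, i)) inferInstance) P := by
    intro m i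
    have h0 : iIndep (fun q : ℕ × Fin b =>
        MeasurableSpace.comap (data q) inferInstance) P := hiid.iIndep
    have hdisj : Disjoint {q : ℕ × Fin b | q.1 ≤ m} {q : ℕ × Fin b | q.1 = m+1} := by
      rw [Set.disjoint_left]
      intro q hq hq'
      simp only [Set.mem_setOf_eq] at hq hq'
      omega
    have h1 := ProbabilityTheory.indep_iSup_of_disjoint
      (fun q => (hmeas q.1 q.2).comap_le) h0 hdisj
    have h2 : MeasurableSpace.comap (data (m+1, i)) inferInstance
        ≤ ⨆ q ∈ {q : ℕ × Fin b | q.1 = m+1}, MeasurableSpace.comap (data q) inferInstance :=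
      le_biSup (fun q : ℕ × Fin b => MeasurableSpace.comap (data q) inferInstance)
        (show ((m+1, i) : ℕ × Fin b) ∈ {q : ℕ × Fin b | q.1 = m+1} from rfl)
    simp only [hFdef]
    exact indep_of_indep_of_le_right h1 h2
  have hindep_pair : ∀ (t m : ℕ) (i : Fin b), t ≤ m →
      IndepFun (fun ω => (η t ω, η m ω)) (data (m+1, i)) P := by
    intro t m i htm
    rw [IndepFun_iff_Indep]
    refine indep_of_indep_of_le_left (hindepS m i) ?_
    exact measurable_iff_comap_le.mp ((measηF t m htm).prodMk (measηF m m le_rfl))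
  -- pushforward integrals
  have hDint : ∀ (t : ℕ) (i : Fin b) (f : (Fin d → ℝ) × ℝ → ℝ), Measurable f →
      Integrable f D → Integrable (fun ω => f (data (t, i) ω)) P := by
    intro t i f hf hfD
    rw [← hlaw t i] at hfD
    exact (integrable_map_measure hf.aestronglyMeasurable (hmeas t i).aemeasurable).mp hfD
  have hDeq : ∀ (t : ℕ) (i : Fin b) (f : (Fin d → ℝ) × ℝ → ℝ), Measurable f →
      ∫ ω, f (data (t, i) ω) ∂P = ∫ p, f p ∂D := by
    intro t i f hf
    rw [← hlaw t i, integral_map (hmeas t i).aemeasurable hf.aestronglyMeasurable]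
  -- L² facts
  have hη2 : ∀ (t : ℕ) (j : Fin d), Integrable (fun ω => η t ω j ^ 2) P := by
    intro t j
    refine Integrable.mono' (hint t) ((measηj t j).pow_const 2).aestronglyMeasurable ?_
    filter_upwards with ω
    rw [Real.norm_eq_abs, abs_of_nonneg (sq_nonneg _)]
    exact sq_le_xx (η t ω) j
  have hη1 : ∀ (t : ℕ) (j : Fin d), Integrable (fun ω => η t ω j) P := by
    intro t j
    refine Integrable.mono' ((hη2 t j).add (integrable_const 1))
      (measηj t j).aestronglyMeasurable ?_
    filter_upwards with ω
    simp only [Pi.add_apply]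
    rw [Real.norm_eq_abs]
    nlinarith [sq_nonneg (|η t ω j| - 1), sq_abs (η t ω j), abs_nonneg (η t ω j)]
  have hηmul : ∀ (t l : ℕ) (j k : Fin d), Integrable (fun ω => η t ω j * η l ω k) P := by
    intro t l j k
    refine Integrable.mono' ((hη2 t j).add (hη2 l k))
      ((measηj t j).mul (measηj l k)).aestronglyMeasurable ?_
    filter_upwards with ω
    simp only [Pi.add_apply]
    rw [Real.norm_eq_abs, abs_mul]
    nlinarith [sq_abs (η t ω j), sq_abs (η l ω k), abs_nonneg (η t ω j), abs_nonneg (η l ω k),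
      sq_nonneg (|η t ω j| - |η l ω k|)]
  have hdotexp : ∀ (A : Matrix (Fin d) (Fin d) ℝ) (t l : ℕ),
      (fun ω => η t ω ⬝ᵥ A *ᵥ (η l ω)) = fun ω => ∑ j, ∑ k, A j k * (η t ω j * η l ω k) := by
    intro A t l
    funext ω
    simp only [dotProduct, Matrix.mulVec, Finset.mul_sum]
    apply Finset.sum_congr rfl; intro j _
    apply Finset.sum_congr rfl; intro k _
    ring
  have intQF : ∀ (A : Matrix (Fin d) (Fin d) ℝ) (t l : ℕ),
      Integrable (fun ω => η t ω ⬝ᵥ A *ᵥ (η l ω)) P := by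
    intro A t l
    rw [hdotexp A t l]
    exact integrable_finset_sum _ fun j _ => integrable_finset_sum _ fun k _ =>
      (hηmul t l j k).const_mul (A j k)
  have psd_qf' : ∀ {M : Matrix (Fin d) (Fin d) ℝ}, M.PosSemidef → ∀ x : Fin d → ℝ,
      0 ≤ x ⬝ᵥ M *ᵥ x := by
    intro M h x
    simpa using h.dotProduct_mulVec_nonneg x
  have hbne : ((b:ℝ)) ≠ 0 := Nat.cast_ne_zero.mpr (by omega)
  have hIFim : ∀ {f g : Ω → ℝ}, IndepFun f g P → Integrable f P → Integrable g P →
      ∫ ω, f ω * g ω ∂P = (∫ ω, f ω ∂P) * ∫ ω, g ω ∂P := by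
    intro f g hfg hf hg
    exact hfg.integral_mul_eq_mul_integral hf.1 hg.1
  -- one-step conditional expectation identity
  have hstep : ∀ (A : Matrix (Fin d) (Fin d) ℝ) (t m : ℕ), t ≤ m →
      ∫ ω, η t ω ⬝ᵥ A *ᵥ (η (m+1) ω) ∂P = ∫ ω, η t ω ⬝ᵥ (A * B) *ᵥ (η m ω) ∂P := by
    intro A t m htm
    set vA : Ω → Fin d → ℝ := fun ω => η t ω ᵥ* A with hvAdef
    have hvAk : ∀ (ω : Ω) (k : Fin d), vA ω k = ∑ l, η t ω l * A l k := by
      intro ω k; simp [hvAdef, Matrix.vecMul, dotProduct]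
    have hintvAk : ∀ k, Integrable (fun ω => vA ω k) P := by
      intro k
      rw [show (fun ω => vA ω k) = fun ω => ∑ l, η t ω l * A l k from funext fun ω => hvAk ω k]
      exact integrable_finset_sum _ fun l _ => (hη1 t l).mul_const _
    have hintprod : ∀ j k, Integrable (fun ω => η m ω j * vA ω k) P := by
      intro j k
      have h : (fun ω => η m ω j * vA ω k) = fun ω => ∑ l, A l k * (η m ω j * η t ω l) := by
        funext ω; rw [hvAk, Finset.mul_sum]; apply Finset.sum_congr rfl; intro l _; ring
      rw [h]
      exact integrable_finset_sum _ fun l _ => (hηmul m t j l).const_mul _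
    have hφmeas : ∀ k : Fin d, Measurable fun q : (Fin d → ℝ) × (Fin d → ℝ) => (q.1 ᵥ* A) k := by
      intro k
      have h : (fun q : (Fin d → ℝ) × (Fin d → ℝ) => (q.1 ᵥ* A) k)
          = fun q => ∑ l, q.1 l * A l k := by
        funext q; simp [Matrix.vecMul, dotProduct]
      rw [h]
      exact Finset.measurable_sum _ fun l _ =>
        ((measurable_pi_apply l).comp measurable_fst).mul measurable_const
    have hindA : ∀ (i : Fin b) (j k : Fin d),
        IndepFun (fun ω => η m ω j * vA ω k) (fun ω => X (m+1) i ω j * X (m+1) i ω k) P := by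
      intro i j k
      exact (hindep_pair t m i htm).comp
        (((measurable_pi_apply j).comp measurable_snd).mul (hφmeas k))
        ((meas_xj j).mul (meas_xj k))
    have hindB : ∀ (i : Fin b) (k : Fin d),
        IndepFun (fun ω => vA ω k)
          (fun ω => (Y (m+1) i ω - wstar ⬝ᵥ X (m+1) i ω) * X (m+1) i ω k) P := by
      intro i k
      exact (hindep_pair t m i htm).comp (hφmeas k) ((meas_eps wstar).mul (meas_xj k))
    have hintXjk : ∀ (i : Fin b) (j k : Fin d),
        Integrable (fun ω => X (m+1) i ω j * X (m+1) i ω k) P :=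
      fun i j k => hDint (m+1) i _ ((meas_xj j).mul (meas_xj k)) (int_xjxk D hmom4 j k)
    have hintEpsX : ∀ (i : Fin b) (k : Fin d),
        Integrable (fun ω => (Y (m+1) i ω - wstar ⬝ᵥ X (m+1) i ω) * X (m+1) i ω k) P :=
      fun i k => hDint (m+1) i _ ((meas_eps wstar).mul (meas_xj k))
        (int_eps_xk D hmom4 hy2 wstar k)
    have hexpA : ∀ i : Fin b, (fun ω => (η m ω ⬝ᵥ X (m+1) i ω) * (vA ω ⬝ᵥ X (m+1) i ω))
        = fun ω => ∑ j, ∑ k, (η m ω j * vA ω k) * (X (m+1) i ω j * X (m+1) i ω k) := by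
      intro i
      funext ω
      simp only [dotProduct]
      rw [Finset.sum_mul_sum]
      apply Finset.sum_congr rfl; intro j _
      apply Finset.sum_congr rfl; intro k _
      ring
    have hexpB : ∀ i : Fin b,
        (fun ω => (Y (m+1) i ω - wstar ⬝ᵥ X (m+1) i ω) * (vA ω ⬝ᵥ X (m+1) i ω))
        = fun ω => ∑ k, vA ω k * ((Y (m+1) i ω - wstar ⬝ᵥ X (m+1) i ω) * X (m+1) i ω k) := by
      intro i
      funext ω
      simp only [dotProduct, Finset.mul_sum]
      apply Finset.sum_congr rfl; intro k _
      ring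
    have hintTermA : ∀ i : Fin b, Integrable (fun ω =>
        (η m ω ⬝ᵥ X (m+1) i ω) * (vA ω ⬝ᵥ X (m+1) i ω)) P := by
      intro i
      rw [hexpA i]
      exact integrable_finset_sum _ fun j _ => integrable_finset_sum _ fun k _ =>
        (hindA i j k).integrable_mul (hintprod j k) (hintXjk i j k)
    have hintTermB : ∀ i : Fin b, Integrable (fun ω =>
        (Y (m+1) i ω - wstar ⬝ᵥ X (m+1) i ω) * (vA ω ⬝ᵥ X (m+1) i ω)) P := by
      intro i
      rw [hexpB i]
      exact integrable_finset_sum _ fun k _ =>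
        (hindB i k).integrable_mul (hintvAk k) (hintEpsX i k)
    have hintAjk : ∀ (i : Fin b) (j k : Fin d), Integrable (fun ω =>
        (η m ω j * vA ω k) * (X (m+1) i ω j * X (m+1) i ω k)) P :=
      fun i j k => (hindA i j k).integrable_mul (hintprod j k) (hintXjk i j k)
    have hEA : ∀ i : Fin b, ∫ ω, (η m ω ⬝ᵥ X (m+1) i ω) * (vA ω ⬝ᵥ X (m+1) i ω) ∂P
        = ∫ ω, η m ω ⬝ᵥ H *ᵥ vA ω ∂P := by
      intro i
      calc ∫ ω, (η m ω ⬝ᵥ X (m+1) i ω) * (vA ω ⬝ᵥ X (m+1) i ω) ∂P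
          = ∑ j, ∑ k, ∫ ω, (η m ω j * vA ω k) * (X (m+1) i ω j * X (m+1) i ω k) ∂P := by
            rw [hexpA i]
            rw [integral_finset_sum _ fun j _ => integrable_finset_sum _ fun k _ => hintAjk i j k]
            exact Finset.sum_congr rfl fun j _ => integral_finset_sum _ fun k _ => hintAjk i j k
        _ = ∑ j, ∑ k, (∫ ω, η m ω j * vA ω k ∂P) * H j k := by
            apply Finset.sum_congr rfl; intro j _
            apply Finset.sum_congr rfl; intro k _
            rw [hIFim (hindA i j k) (hintprod j k) (hintXjk i j k)]
            congr 1
            rw [show (fun ω => X (m+1) i ω j * X (m+1) i ω k)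
                = fun ω => (fun p : (Fin d → ℝ) × ℝ => p.1 j * p.1 k) (data (m+1, i) ω) from rfl]
            rw [hDeq (m+1) i (fun p : (Fin d → ℝ) × ℝ => p.1 j * p.1 k) ((meas_xj j).mul (meas_xj k))]
            exact (Hentry j k).symm
        _ = ∑ j, ∑ k, ∫ ω, (η m ω j * vA ω k) * H j k ∂P := by
            apply Finset.sum_congr rfl; intro j _
            apply Finset.sum_congr rfl; intro k _
            rw [integral_mul_const]
        _ = ∫ ω, ∑ j, ∑ k, (η m ω j * vA ω k) * H j k ∂P := by
            rw [integral_finset_sum _ fun j _ => integrable_finset_sum _ fun k _ =>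
              (hintprod j k).mul_const (H j k)]
            exact (Finset.sum_congr rfl fun j _ => (integral_finset_sum _ fun k _ =>
              (hintprod j k).mul_const _)).symm
        _ = ∫ ω, η m ω ⬝ᵥ H *ᵥ vA ω ∂P := by
            congr 1; funext ω
            simp only [dotProduct, Matrix.mulVec, Finset.mul_sum]
            apply Finset.sum_congr rfl; intro j _
            apply Finset.sum_congr rfl; intro k _
            ring
    have hintBk : ∀ (i : Fin b) (k : Fin d), Integrable (fun ω =>
        vA ω k * ((Y (m+1) i ω - wstar ⬝ᵥ X (m+1) i ω) * X (m+1) i ω k)) P :=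
      fun i k => (hindB i k).integrable_mul (hintvAk k) (hintEpsX i k)
    have hEB : ∀ i : Fin b,
        ∫ ω, (Y (m+1) i ω - wstar ⬝ᵥ X (m+1) i ω) * (vA ω ⬝ᵥ X (m+1) i ω) ∂P = 0 := by
      intro i
      rw [hexpB i, integral_finset_sum _ fun k _ => hintBk i k]
      apply Finset.sum_eq_zero; intro k _
      rw [hIFim (hindB i k) (hintvAk k) (hintEpsX i k)]
      have h : ∫ ω, (Y (m+1) i ω - wstar ⬝ᵥ X (m+1) i ω) * X (m+1) i ω k ∂P
          = ∫ p, (p.2 - wstar ⬝ᵥ p.1) * p.1 k ∂D := by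
        rw [show (fun ω => (Y (m+1) i ω - wstar ⬝ᵥ X (m+1) i ω) * X (m+1) i ω k)
            = fun ω => (fun p : (Fin d → ℝ) × ℝ => (p.2 - wstar ⬝ᵥ p.1) * p.1 k)
              (data (m+1, i) ω) from rfl]
        exact hDeq (m+1) i _ ((meas_eps wstar).mul (meas_xj k))
      rw [h, eps_orth D hmom4 hy2 wstar hmin k, mul_zero]
    have hrec : ∀ ω, η (m+1) ω = η m ω - (γ/(b:ℝ)) •
        ∑ i : Fin b, ((η m ω ⬝ᵥ X (m+1) i ω) - (Y (m+1) i ω - wstar ⬝ᵥ X (m+1) i ω)) •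
          X (m+1) i ω := by
      intro ω
      show w (m+1) ω - wstar = _
      rw [hwrec m ω]
      have hcoef : ∀ i : Fin b, i ∈ Finset.univ →
          ((w m ω ⬝ᵥ X (m+1) i ω) - Y (m+1) i ω) • X (m+1) i ω
          = ((η m ω ⬝ᵥ X (m+1) i ω) - (Y (m+1) i ω - wstar ⬝ᵥ X (m+1) i ω)) • X (m+1) i ω := by
        intro i _
        congr 1
        have h : η m ω ⬝ᵥ X (m+1) i ω = w m ω ⬝ᵥ X (m+1) i ω - wstar ⬝ᵥ X (m+1) i ω := by
          simp [hηdef, sub_dotProduct]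
        rw [h]; ring
      rw [Finset.sum_congr rfl hcoef]
      simp only [hηdef]
      abel
    have hptw : ∀ ω, η t ω ⬝ᵥ A *ᵥ (η (m+1) ω)
        = η t ω ⬝ᵥ A *ᵥ (η m ω)
          - (γ/(b:ℝ)) * ∑ i : Fin b,
            ((η m ω ⬝ᵥ X (m+1) i ω) * (vA ω ⬝ᵥ X (m+1) i ω)
              - (Y (m+1) i ω - wstar ⬝ᵥ X (m+1) i ω) * (vA ω ⬝ᵥ X (m+1) i ω)) := by
      intro ω
      have hd1 : ∀ z : Fin d → ℝ, η t ω ⬝ᵥ A *ᵥ z = vA ω ⬝ᵥ z := by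
        intro z; rw [Matrix.dotProduct_mulVec]
      rw [hrec ω, hd1, hd1, dotProduct_sub, dotProduct_smul, smul_eq_mul, dot_sum]
      have hsc : ∀ i : Fin b, i ∈ Finset.univ →
          vA ω ⬝ᵥ (((η m ω ⬝ᵥ X (m+1) i ω) - (Y (m+1) i ω - wstar ⬝ᵥ X (m+1) i ω)) •
            X (m+1) i ω)
          = (η m ω ⬝ᵥ X (m+1) i ω) * (vA ω ⬝ᵥ X (m+1) i ω)
            - (Y (m+1) i ω - wstar ⬝ᵥ X (m+1) i ω) * (vA ω ⬝ᵥ X (m+1) i ω) := by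
        intro i _
        rw [dotProduct_smul, smul_eq_mul]
        ring
      rw [Finset.sum_congr rfl hsc]
    have hcross_int : Integrable (fun ω => η m ω ⬝ᵥ H *ᵥ vA ω) P := by
      have h : (fun ω => η m ω ⬝ᵥ H *ᵥ vA ω) = fun ω => η m ω ⬝ᵥ (H * Aᵀ) *ᵥ η t ω := by
        funext ω
        rw [hvAdef]
        rw [show (fun ω => η t ω ᵥ* A) ω = Aᵀ *ᵥ η t ω from (Matrix.mulVec_transpose A (η t ω)).symm]
        rw [Matrix.mulVec_mulVec]
      rw [h]
      exact intQF (H * Aᵀ) m t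
    have hptw2 : ∀ ω, η t ω ⬝ᵥ (A * B) *ᵥ (η m ω)
        = η t ω ⬝ᵥ A *ᵥ (η m ω) - γ * (η m ω ⬝ᵥ H *ᵥ vA ω) := by
      intro ω
      have h1 : η m ω ⬝ᵥ H *ᵥ vA ω = η t ω ⬝ᵥ (A * H) *ᵥ η m ω := by
        rw [dot_symm Hsymm]
        rw [Matrix.dotProduct_mulVec (η t ω) (A * H), ← Matrix.vecMul_vecMul,
          Matrix.dotProduct_mulVec (vA ω) H]
      have h2 : A * B = A - γ • (A * H) := by
        rw [hBdef, Matrix.mul_sub, Matrix.mul_one, Matrix.mul_smul]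
      rw [h2, sub_mulVec, dotProduct_sub, smul_mulVec, dotProduct_smul, smul_eq_mul, h1]
    calc ∫ ω, η t ω ⬝ᵥ A *ᵥ (η (m+1) ω) ∂P
        = ∫ ω, (η t ω ⬝ᵥ A *ᵥ (η m ω)
            - (γ/(b:ℝ)) * ∑ i : Fin b,
              ((η m ω ⬝ᵥ X (m+1) i ω) * (vA ω ⬝ᵥ X (m+1) i ω)
                - (Y (m+1) i ω - wstar ⬝ᵥ X (m+1) i ω) * (vA ω ⬝ᵥ X (m+1) i ω))) ∂P := by
          congr 1; funext ω; exact hptw ω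
      _ = ∫ ω, η t ω ⬝ᵥ A *ᵥ (η m ω) ∂P - (γ/(b:ℝ)) * ∑ i : Fin b,
            ∫ ω, ((η m ω ⬝ᵥ X (m+1) i ω) * (vA ω ⬝ᵥ X (m+1) i ω)
              - (Y (m+1) i ω - wstar ⬝ᵥ X (m+1) i ω) * (vA ω ⬝ᵥ X (m+1) i ω)) ∂P := by
          have hintsub : ∀ i : Fin b, Integrable (fun ω =>
              (η m ω ⬝ᵥ X (m+1) i ω) * (vA ω ⬝ᵥ X (m+1) i ω)
                - (Y (m+1) i ω - wstar ⬝ᵥ X (m+1) i ω) * (vA ω ⬝ᵥ X (m+1) i ω)) P :=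
            fun i => (hintTermA i).sub (hintTermB i)
          have hintsum : Integrable (fun ω => ∑ i : Fin b,
              ((η m ω ⬝ᵥ X (m+1) i ω) * (vA ω ⬝ᵥ X (m+1) i ω)
                - (Y (m+1) i ω - wstar ⬝ᵥ X (m+1) i ω) * (vA ω ⬝ᵥ X (m+1) i ω))) P :=
            integrable_finset_sum _ fun i _ => hintsub i
          rw [integral_sub (intQF A t m) (hintsum.const_mul _),
            integral_const_mul,
            integral_finset_sum _ fun i _ => hintsub i]
      _ = ∫ ω, η t ω ⬝ᵥ A *ᵥ (η m ω) ∂P - γ * ∫ ω, η m ω ⬝ᵥ H *ᵥ vA ω ∂P := by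
          have hi : ∀ i : Fin b, i ∈ Finset.univ →
              ∫ ω, ((η m ω ⬝ᵥ X (m+1) i ω) * (vA ω ⬝ᵥ X (m+1) i ω)
                - (Y (m+1) i ω - wstar ⬝ᵥ X (m+1) i ω) * (vA ω ⬝ᵥ X (m+1) i ω)) ∂P
              = ∫ ω, η m ω ⬝ᵥ H *ᵥ vA ω ∂P := by
            intro i _
            rw [integral_sub (hintTermA i) (hintTermB i), hEA i, hEB i, sub_zero]
          rw [Finset.sum_congr rfl hi, Finset.sum_const, Finset.card_univ, Fintype.card_fin,
            nsmul_eq_mul]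
          field_simp
      _ = ∫ ω, η t ω ⬝ᵥ (A * B) *ᵥ (η m ω) ∂P := by
          rw [show (fun ω => η t ω ⬝ᵥ (A * B) *ᵥ (η m ω))
              = fun ω => η t ω ⬝ᵥ A *ᵥ (η m ω) - γ * (η m ω ⬝ᵥ H *ᵥ vA ω)
            from funext hptw2]
          rw [integral_sub (intQF A t m) (hcross_int.const_mul γ), integral_const_mul]
  -- iterated identity
  have hkey : ∀ (t k : ℕ) (A : Matrix (Fin d) (Fin d) ℝ),
      ∫ ω, η t ω ⬝ᵥ A *ᵥ (η (t+k) ω) ∂P = ∫ ω, η t ω ⬝ᵥ (A * B^k) *ᵥ (η t ω) ∂P := by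
    intro t k
    induction k with
    | zero => intro A; simp
    | succ k ih =>
      intro A
      rw [show t + (k+1) = (t+k) + 1 from rfl]
      rw [hstep A t (t+k) (Nat.le_add_right t k)]
      rw [ih (A * B)]
      rw [mul_assoc, ← pow_succ']
  -- covariance quadratic form function
  set Q : ℕ → ℕ → ℝ := fun t l => ∫ ω, η t ω ⬝ᵥ H *ᵥ (η l ω) ∂P with hQdef
  have hQsymm : ∀ t l, Q t l = Q l t := by
    intro t l
    simp only [hQdef]
    congr 1; funext ω
    exact dot_symm Hsymm _ _
  have hQub : ∀ t l, t ≤ l → Q t l = ∫ ω, η t ω ⬝ᵥ (H * B^(l-t)) *ᵥ (η t ω) ∂P := by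
    intro t l htl
    obtain ⟨k, rfl⟩ := Nat.le.dest htl
    simp only [hQdef]
    rw [Nat.add_sub_cancel_left]
    exact hkey t k H
  have hEb : ∀ t, Integrable (fun ω => η t ω ⬝ᵥ η t ω) P := fun t => hint t
  -- per-index bound
  have hper : ∀ t ∈ Iset, Q t t + 2 * ∑ l ∈ Iset, (if t < l then Q t l else 0)
      ≤ (2/γ) * ∫ ω, η t ω ⬝ᵥ η t ω ∂P := by
    intro t ht
    have htmem : s < t ∧ t ≤ s + N := by
      rw [hIdef, Finset.mem_Ioc] at ht; exact ht
    have hfilter : ∑ l ∈ Iset, (if t < l then Q t l else 0)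
        = ∑ l ∈ Finset.Ioc t (s+N), Q t l := by
      rw [← Finset.sum_filter]
      congr 1
      rw [hIdef]
      ext l
      simp only [Finset.mem_filter, Finset.mem_Ioc]
      omega
    have hreindex : ∑ l ∈ Finset.Ioc t (s+N), Q t l
        = ∑ k ∈ Finset.range (s+N-t), Q t (t+1+k) := by
      rw [show Finset.Ioc t (s+N) = Finset.Ico (t+1) (s+N+1) by
        ext l; simp only [Finset.mem_Ioc, Finset.mem_Ico]; omega]
      rw [Finset.sum_Ico_eq_sum_range]
      apply Finset.sum_congr
      · congr 1
        omega
      · intro k _; rfl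
    have hQrw : ∀ k : ℕ, k ∈ Finset.range (s+N-t) →
        Q t (t+1+k) = ∫ ω, η t ω ⬝ᵥ (H * B^(k+1)) *ᵥ (η t ω) ∂P := by
      intro k _
      rw [hQub t (t+1+k) (by omega)]
      rw [show t+1+k-t = k+1 from by omega]
    have hQtt : Q t t = ∫ ω, η t ω ⬝ᵥ H *ᵥ (η t ω) ∂P := by simp only [hQdef]
    have hCsum : Q t t + 2 * ∑ l ∈ Iset, (if t < l then Q t l else 0)
        = ∫ ω, η t ω ⬝ᵥ ((H + (2:ℝ) • ∑ k ∈ Finset.range (s+N-t), H * B^(k+1))) *ᵥ (η t ω) ∂P := by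
      rw [hfilter, hreindex, Finset.sum_congr rfl hQrw, hQtt]
      rw [← integral_finset_sum _ fun k _ => intQF (H * B^(k+1)) t t]
      rw [← integral_const_mul]
      rw [← integral_add (intQF H t t)
        ((integrable_finset_sum _ fun (k : ℕ) (_ : k ∈ Finset.range (s+N-t)) =>
          intQF (H * B^(k+1)) t t).const_mul 2)]
      congr 1; funext ω
      rw [add_mulVec, dotProduct_add, smul_mulVec, dotProduct_smul, smul_eq_mul, qf_sum]
    rw [hCsum]
    have hpsd : ((2/γ) • (1 : Matrix (Fin d) (Fin d) ℝ)
        - (H + (2:ℝ) • ∑ k ∈ Finset.range (s+N-t), H * B^(k+1))).PosSemidef := by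
      have hgp := geom_psd HPSD hγpos (hBdef ▸ BPSD) (s+N-t)
      rw [← hBdef] at hgp
      exact hgp
    have hpoint : ∀ ω, η t ω ⬝ᵥ (H + (2:ℝ) • ∑ k ∈ Finset.range (s+N-t), H * B^(k+1)) *ᵥ η t ω
        ≤ (2/γ) * (η t ω ⬝ᵥ η t ω) := by
      intro ω
      have h0 := psd_qf' hpsd (η t ω)
      rw [sub_mulVec, dotProduct_sub, smul_mulVec, one_mulVec, dotProduct_smul,
        smul_eq_mul] at h0
      linarith
    calc ∫ ω, η t ω ⬝ᵥ (H + (2:ℝ) • ∑ k ∈ Finset.range (s+N-t), H * B^(k+1)) *ᵥ (η t ω) ∂P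
        ≤ ∫ ω, (2/γ) * (η t ω ⬝ᵥ η t ω) ∂P :=
          integral_mono (intQF _ t t) ((hEb t).const_mul _) hpoint
      _ = (2/γ) * ∫ ω, η t ω ⬝ᵥ η t ω ∂P := integral_const_mul _ _
  -- reduce the goal
  have hNne : ((N:ℝ)) ≠ 0 := Nat.cast_ne_zero.mpr (by omega)
  have hNinv : (0:ℝ) ≤ (N:ℝ)⁻¹ := by positivity
  have hvint : ∀ (i j : Fin d), Integrable (fun ω =>
      ((N : ℝ)⁻¹ • ∑ t ∈ Iset, η t ω) j * ((N : ℝ)⁻¹ • ∑ t ∈ Iset, η t ω) i) P := by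
    intro i j
    have h : (fun ω => ((N : ℝ)⁻¹ • ∑ t ∈ Iset, η t ω) j * ((N : ℝ)⁻¹ • ∑ t ∈ Iset, η t ω) i)
        = fun ω => ((N:ℝ)⁻¹ * (N:ℝ)⁻¹) * ∑ t ∈ Iset, ∑ l ∈ Iset, η t ω j * η l ω i := by
      funext ω
      simp only [Pi.smul_apply, Finset.sum_apply, smul_eq_mul]
      rw [mul_mul_mul_comm, Finset.sum_mul_sum]
    rw [h]
    exact (integrable_finset_sum _ fun t _ =>
      integrable_finset_sum _ fun l _ => hηmul t l j i).const_mul _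
  have hbil : ∀ ω : Ω, (∑ t ∈ Iset, η t ω) ⬝ᵥ H *ᵥ (∑ l ∈ Iset, η l ω)
      = ∑ t ∈ Iset, ∑ l ∈ Iset, η t ω ⬝ᵥ H *ᵥ η l ω := by
    intro ω
    rw [sum_dot]
    apply Finset.sum_congr rfl; intro t _
    rw [Matrix.dotProduct_mulVec, dot_sum]
    apply Finset.sum_congr rfl; intro l _
    rw [← Matrix.dotProduct_mulVec]
  have hLHS : (H * matExp P (fun ω => vecMulVec ((N : ℝ)⁻¹ • ∑ t ∈ Iset, η t ω)
      ((N : ℝ)⁻¹ • ∑ t ∈ Iset, η t ω))).trace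
      = (N:ℝ)⁻¹ * ((N:ℝ)⁻¹ * ∑ t ∈ Iset, ∑ l ∈ Iset, Q t l) := by
    calc (H * matExp P (fun ω => vecMulVec ((N : ℝ)⁻¹ • ∑ t ∈ Iset, η t ω)
        ((N : ℝ)⁻¹ • ∑ t ∈ Iset, η t ω))).trace
        = ∑ i, ∑ j, H i j * ∫ ω, ((N : ℝ)⁻¹ • ∑ t ∈ Iset, η t ω) j
            * ((N : ℝ)⁻¹ • ∑ t ∈ Iset, η t ω) i ∂P := by
          simp only [Matrix.trace, Matrix.diag, Matrix.mul_apply, matExp, Matrix.of_apply,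
            vecMulVec_apply]
      _ = ∑ i, ∑ j, ∫ ω, H i j * (((N : ℝ)⁻¹ • ∑ t ∈ Iset, η t ω) j
            * ((N : ℝ)⁻¹ • ∑ t ∈ Iset, η t ω) i) ∂P := by
          apply Finset.sum_congr rfl; intro i _
          apply Finset.sum_congr rfl; intro j _
          rw [integral_const_mul]
      _ = ∫ ω, ∑ i, ∑ j, H i j * (((N : ℝ)⁻¹ • ∑ t ∈ Iset, η t ω) j
            * ((N : ℝ)⁻¹ • ∑ t ∈ Iset, η t ω) i) ∂P := by
          rw [integral_finset_sum _ fun i _ => integrable_finset_sum _ fun j _ =>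
            (hvint i j).const_mul (H i j)]
          exact (Finset.sum_congr rfl fun i _ => (integral_finset_sum _ fun j _ =>
            (hvint i j).const_mul _)).symm
      _ = ∫ ω, ((N : ℝ)⁻¹ • ∑ t ∈ Iset, η t ω) ⬝ᵥ H *ᵥ ((N : ℝ)⁻¹ • ∑ t ∈ Iset, η t ω) ∂P := by
          congr 1; funext ω
          simp only [dotProduct, Matrix.mulVec, Finset.mul_sum]
          apply Finset.sum_congr rfl; intro i _
          apply Finset.sum_congr rfl; intro j _
          ring
      _ = ∫ ω, (N:ℝ)⁻¹ * ((N:ℝ)⁻¹ * ∑ t ∈ Iset, ∑ l ∈ Iset, η t ω ⬝ᵥ H *ᵥ η l ω) ∂P := by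
          congr 1; funext ω
          rw [smul_dotProduct, Matrix.mulVec_smul, dotProduct_smul, smul_eq_mul, smul_eq_mul,
            hbil ω]
      _ = (N:ℝ)⁻¹ * ((N:ℝ)⁻¹ * ∑ t ∈ Iset, ∑ l ∈ Iset, Q t l) := by
          rw [integral_const_mul, integral_const_mul]
          congr 1
          rw [integral_finset_sum _ fun t _ => integrable_finset_sum _ fun l _ => intQF H t l]
          congr 1
          exact Finset.sum_congr rfl fun t _ => integral_finset_sum _ fun l _ => intQF H t l
  have hRHS : ∀ l : ℕ, (matExp P (fun ω => vecMulVec (η l ω) (η l ω))).trace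
      = ∫ ω, η l ω ⬝ᵥ η l ω ∂P := by
    intro l
    simp only [Matrix.trace, Matrix.diag, matExp, Matrix.of_apply, vecMulVec_apply]
    rw [← integral_finset_sum _ fun i _ => hηmul l l i i]
    congr 1
  show (H * matExp P (fun ω => vecMulVec ((N : ℝ)⁻¹ • ∑ t ∈ Iset, η t ω)
      ((N : ℝ)⁻¹ • ∑ t ∈ Iset, η t ω))).trace
    ≤ (2 / (γ * (N:ℝ)^2)) * ∑ l ∈ Iset, (matExp P (fun ω => vecMulVec (η l ω) (η l ω))).trace
  rw [hLHS, Finset.sum_congr rfl fun l _ => hRHS l]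
  calc (N:ℝ)⁻¹ * ((N:ℝ)⁻¹ * ∑ t ∈ Iset, ∑ l ∈ Iset, Q t l)
      = (N:ℝ)⁻¹ * ((N:ℝ)⁻¹ * ∑ t ∈ Iset,
          (Q t t + 2 * ∑ l ∈ Iset, (if t < l then Q t l else 0))) := by
        rw [sum_sq_decomp hQsymm]
    _ ≤ (N:ℝ)⁻¹ * ((N:ℝ)⁻¹ * ∑ t ∈ Iset, (2/γ) * ∫ ω, η t ω ⬝ᵥ η t ω ∂P) := by
        exact mul_le_mul_of_nonneg_left
          (mul_le_mul_of_nonneg_left (Finset.sum_le_sum hper) hNinv) hNinv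
    _ = (2 / (γ * (N:ℝ)^2)) * ∑ l ∈ Iset, ∫ ω, η l ω ⬝ᵥ η l ω ∂P := by
        rw [← Finset.mul_sum]
        have hc : (N:ℝ)⁻¹ * ((N:ℝ)⁻¹ * (2/γ)) = 2 / (γ * (N:ℝ)^2) := by
          rw [eq_div_iff (by positivity)]
          field_simp
        rw [← hc, mul_assoc, mul_assoc]



end
end
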